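/- arXiv:2601.14469 — 4 statements merged into one kernel-verified Lean document; each statement's English description precedes it below -/
import Mathlib

section
/- Let n ≥ 3 and let Ψ ∈ C²([0,∞)) be a global positive solution of (eqnPsi) such that lim_{y→∞} y² (nΨ(y) + yΨ'(y)) = L ∈ (0,∞). Then the profile U(y) := nΨ(y) + yΨ'(y) is strictly positive on [0,∞). (Key step: if n ≥ 3, Ψ(y) > 0, U(y) = yΨ'(y) + nΨ(y) = 0 and U'(y) = yΨ''(y) + (n+1)Ψ'(y) ≥ 0 at some y > 0 at which the ODE (eqnPsi) holds, then −(n−2)Ψ(y) = 2(Ψ''(y) + ((n+1)/y)Ψ'(y)) ≥ 0, a contradiction.) -/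
open Real Set Filter
open scoped Topology

noncomputable section

/-- `Ψ` is a global `C²([0,∞))` solution of (eqnPsi):
`Ψ'' + ((n+1)/y - y/2)Ψ' - Ψ + Ψ(yΨ' + nΨ) = 0` on `(0,∞)`, `Ψ'(0) = 0`. -/
structure IsEqnPsiSol (n : ℕ) (Ψ : ℝ → ℝ) : Prop where
  diff1 : ∀ y ∈ Ici (0:ℝ), DifferentiableAt ℝ Ψ y
  diff2 : ∀ y ∈ Ici (0:ℝ), DifferentiableAt ℝ (deriv Ψ) y
  cont2 : ContinuousOn (deriv (deriv Ψ)) (Ici (0:ℝ))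
  init0 : deriv Ψ 0 = 0
  ode : ∀ y : ℝ, 0 < y →
    deriv (deriv Ψ) y + (((n : ℝ) + 1) / y - y / 2) * deriv Ψ y - Ψ y
      + Ψ y * (y * deriv Ψ y + (n : ℝ) * Ψ y) = 0

/-- positivity of self-similar profiles, cf. (posU).
Let `n ≥ 3` and let `Ψ ∈ C²([0,∞))` be a global positive solution of (eqnPsi) with
`y²(nΨ(y) + yΨ'(y)) → L ∈ (0,∞)` as `y → ∞`. Then the profile
`U(y) = nΨ(y) + yΨ'(y)` is strictly positive on `[0,∞)`. -/
theorem statement4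
    (n : ℕ) (hn3 : 3 ≤ n)
    (Ψ : ℝ → ℝ) (hΨ : IsEqnPsiSol n Ψ)
    (hpos : ∀ y : ℝ, 0 ≤ y → 0 < Ψ y)
    (L : ℝ) (hL : 0 < L)
    (hlim : Tendsto (fun y : ℝ => y ^ 2 * ((n : ℝ) * Ψ y + y * deriv Ψ y))
      atTop (𝓝 L)) :
    ∀ y : ℝ, 0 ≤ y → 0 < (n : ℝ) * Ψ y + y * deriv Ψ y := by
  set U : ℝ → ℝ := fun y => (n : ℝ) * Ψ y + y * deriv Ψ y with hUdef
  have hn : (3:ℝ) ≤ (n:ℝ) := by exact_mod_cast hn3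
  -- derivative of U
  have hD : ∀ y : ℝ, 0 ≤ y →
      HasDerivAt U (((n:ℝ)+1) * deriv Ψ y + y * deriv (deriv Ψ) y) y := by
    intro y hy
    have h1 := ((hΨ.diff1 y hy).hasDerivAt).const_mul (n:ℝ)
    have h2 := (hasDerivAt_id y).mul ((hΨ.diff2 y hy).hasDerivAt)
    have h := h1.add h2
    refine h.congr_deriv ?_
    simp only [id_eq]
    ring
  have hUcont : ∀ y : ℝ, 0 ≤ y → ContinuousAt U y := by
    intro y hy
    exact (continuousAt_const.mul (hΨ.diff1 y hy).continuousAt).add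
      (continuousAt_id.mul (hΨ.diff2 y hy).continuousAt)
  -- key: at a positive zero of U, U' < 0
  have hkey : ∀ y : ℝ, 0 < y → U y = 0 →
      ((n:ℝ)+1) * deriv Ψ y + y * deriv (deriv Ψ) y < 0 := by
    intro y hy h0
    have hode := hΨ.ode y hy
    have hy' : y ≠ 0 := ne_of_gt hy
    have hΨy := hpos y hy.le
    have h0' : (n:ℝ) * Ψ y + y * deriv Ψ y = 0 := h0
    have hZ : y * deriv Ψ y + (n:ℝ) * Ψ y = 0 := by linarith
    rw [hZ] at hode
    have hq : deriv (deriv Ψ) y = Ψ y - (((n:ℝ)+1)/y - y/2) * deriv Ψ y := by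
      have := hode; linarith [this]
    rw [hq]
    have hexp : y * ((((n:ℝ)+1)/y - y/2) * deriv Ψ y)
        = ((n:ℝ)+1) * deriv Ψ y - (y*y/2) * deriv Ψ y := by
      field_simp
    have hyp : y * deriv Ψ y = -(n:ℝ) * Ψ y := by linarith
    nlinarith [mul_pos hy hΨy, hexp, hyp]
  -- eventual positivity
  have hev : ∀ᶠ y in atTop, L/2 < y^2 * U y :=
    hlim.eventually (eventually_gt_nhds (half_lt_self hL))
  obtain ⟨R₀, hR₀⟩ := eventually_atTop.mp hev
  set R : ℝ := max R₀ 1 with hRdef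
  have hRpos : (0:ℝ) < R := lt_of_lt_of_le one_pos (le_max_right _ _)
  have hR : ∀ y : ℝ, R ≤ y → 0 < U y := by
    intro y hy
    have h1 : L/2 < y^2 * U y := hR₀ y (le_trans (le_max_left _ _) hy)
    have hy1 : (1:ℝ) ≤ y := le_trans (le_max_right _ _) hy
    by_contra h
    push_neg at h
    have h2 : y^2 * U y ≤ 0 := mul_nonpos_of_nonneg_of_nonpos (sq_nonneg y) h
    have h3 : L/2 < 0 := lt_of_lt_of_le h1 h2
    linarith
  -- main argument
  by_contra hcon
  push_neg at hcon
  obtain ⟨y₀, hy₀0, hy₀⟩ := hcon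
  have hU0 : 0 < U 0 := by
    have h1 := hpos 0 le_rfl
    simp only [hUdef, zero_mul, add_zero]
    nlinarith
  have hy₀pos : 0 < y₀ := by
    rcases lt_or_eq_of_le hy₀0 with h | h
    · exact h
    · exfalso
      subst h
      exact absurd (show U 0 ≤ 0 from hy₀) (not_le.mpr hU0)
  have hy₀R : y₀ < R := by
    by_contra h
    push_neg at h
    exact absurd (hR y₀ h) (not_lt.mpr hy₀)
  -- set of nonpositivity points
  set S : Set ℝ := {y | y ∈ Icc y₀ R ∧ U y ≤ 0} with hSdef
  have hScont : ContinuousOn U (Icc y₀ R) := fun y hy =>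
    (hUcont y (le_trans hy₀0 hy.1)).continuousWithinAt
  have hSclosed : IsClosed S := by
    have : S = Icc y₀ R ∩ U ⁻¹' Iic 0 := by
      ext z
      simp only [hSdef, mem_setOf_eq, mem_inter_iff, mem_preimage, mem_Iic]
    rw [this]
    exact ContinuousOn.preimage_isClosed_of_isClosed hScont isClosed_Icc isClosed_Iic
  have hSne : S.Nonempty := ⟨y₀, ⟨le_rfl, hy₀R.le⟩, hy₀⟩
  have hScpt : IsCompact S :=
    isCompact_Icc.of_isClosed_subset hSclosed (fun z hz => hz.1)
  obtain ⟨y₁, hy₁S, hy₁max⟩ := hScpt.exists_isGreatest hSne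
  have hy₁Icc : y₁ ∈ Icc y₀ R := hy₁S.1
  have hy₁pos : 0 < y₁ := lt_of_lt_of_le hy₀pos hy₁Icc.1
  -- U > 0 strictly to the right of y₁
  have hright : ∀ z : ℝ, y₁ < z → 0 < U z := by
    intro z hz
    rcases le_or_gt z R with hzR | hzR
    · by_contra h
      push_neg at h
      have hzS : z ∈ S := ⟨⟨le_trans hy₁Icc.1 hz.le, hzR⟩, h⟩
      exact absurd (hy₁max hzS) (not_le.mpr hz)
    · exact hR z hzR.le
  -- U y₁ = 0
  have hU1 : U y₁ = 0 := by
    refine le_antisymm hy₁S.2 ?_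
    have htd : Tendsto U (𝓝[>] y₁) (𝓝 (U y₁)) :=
      ((hUcont y₁ hy₁pos.le).tendsto).mono_left nhdsWithin_le_nhds
    refine ge_of_tendsto htd ?_
    filter_upwards [self_mem_nhdsWithin] with z hz
    exact (hright z hz).le
  -- deriv of U at y₁ is ≥ 0 (right difference quotients)
  have hDy₁ := hD y₁ hy₁pos.le
  have hslope : Tendsto (slope U y₁) (𝓝[>] y₁)
      (𝓝 (((n:ℝ)+1) * deriv Ψ y₁ + y₁ * deriv (deriv Ψ) y₁)) := by
    have := hasDerivAt_iff_tendsto_slope.mp hDy₁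
    exact this.mono_left (nhdsWithin_mono _ (fun z hz => ne_of_gt hz))
  have hge : 0 ≤ ((n:ℝ)+1) * deriv Ψ y₁ + y₁ * deriv (deriv Ψ) y₁ := by
    refine ge_of_tendsto hslope ?_
    filter_upwards [self_mem_nhdsWithin] with z hz
    have hz' : 0 < z - y₁ := sub_pos.mpr hz
    have : 0 ≤ U z - U y₁ := by rw [hU1]; simpa using (hright z hz).le
    rw [slope_def_field]
    exact div_nonneg (by simpa [hU1] using (hright z hz).le) hz'.le
  exact absurd hge (not_le.mpr (hkey y₁ hy₁pos hU1))
end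
end

section
/- Let n ≥ 3 and let V ∈ C²((0,∞)) satisfy V''(r) + ((n+1)/r) V'(r) + n V²(r) + r V(r) V'(r) = 0 and V(r) ≥ 0 for all r ∈ (0,∞). Then for every ε > 0 there exists a constant C = C(ε) > 0 such that V(r) ≤ C r^{-2} for all r ∈ (ε,∞). -/
open Real Set Filter
open scoped Topology

noncomputable section

private lemma cont_of_deriv {f f' : ℝ → ℝ} (hf : ∀ x, HasDerivAt f (f' x) x) :
    Continuous f := continuous_iff_continuousAt.mpr fun x => (hf x).continuousAt

private lemma le_of_deriv_nonpos' {f f' : ℝ → ℝ} (hf : ∀ x, HasDerivAt f (f' x) x)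
    {a b : ℝ} (hab : a ≤ b) (h : ∀ x ∈ Ioo a b, f' x ≤ 0) : f b ≤ f a := by
  have H : AntitoneOn f (Icc a b) := by
    apply antitoneOn_of_deriv_nonpos (convex_Icc a b)
      (fun x _ => (hf x).continuousAt.continuousWithinAt)
      (fun x _ => (hf x).differentiableAt.differentiableWithinAt)
    intro x hx
    rw [interior_Icc] at hx
    rw [(hf x).deriv]
    exact h x hx
  exact H (left_mem_Icc.2 hab) (right_mem_Icc.2 hab) hab

private lemma le_of_deriv_nonneg' {f f' : ℝ → ℝ} (hf : ∀ x, HasDerivAt f (f' x) x)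
    {a b : ℝ} (hab : a ≤ b) (h : ∀ x ∈ Ioo a b, 0 ≤ f' x) : f a ≤ f b := by
  have H : MonotoneOn f (Icc a b) := by
    apply monotoneOn_of_deriv_nonneg (convex_Icc a b)
      (fun x _ => (hf x).continuousAt.continuousWithinAt)
      (fun x _ => (hf x).differentiableAt.differentiableWithinAt)
    intro x hx
    rw [interior_Icc] at hx
    rw [(hf x).deriv]
    exact h x hx
  exact H (left_mem_Icc.2 hab) (right_mem_Icc.2 hab) hab

private lemma neg_after {w : ℝ → ℝ} {u₁ t₁ : ℝ} (h : HasDerivAt w u₁ t₁) (hw0 : w t₁ = 0)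
    (hu : u₁ < 0) : ∃ x, t₁ < x ∧ w x < 0 := by
  have hs := hasDerivAt_iff_tendsto_slope.mp h
  have hev : ∀ᶠ x in 𝓝[≠] t₁, slope w t₁ x < 0 := hs.eventually_lt_const hu
  have hev' : ∀ᶠ x in 𝓝[>] t₁, slope w t₁ x < 0 :=
    hev.filter_mono (nhdsWithin_mono t₁ (fun x hx => ne_of_gt hx))
  obtain ⟨x, hx1, hx2⟩ := (hev'.and eventually_mem_nhdsWithin).exists
  refine ⟨x, hx2, ?_⟩
  rw [slope_def_field, hw0, sub_zero] at hx1
  rcases div_neg_iff.mp hx1 with ⟨_, h2⟩ | ⟨h1, _⟩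
  · exact absurd (sub_pos.2 hx2) (not_lt.2 h2.le)
  · exact h1

private lemma neg_before {w : ℝ → ℝ} {u₁ t₁ : ℝ} (h : HasDerivAt w u₁ t₁) (hw0 : w t₁ = 0)
    (hu : 0 < u₁) : ∃ x, x < t₁ ∧ w x < 0 := by
  have hs := hasDerivAt_iff_tendsto_slope.mp h
  have hev : ∀ᶠ x in 𝓝[≠] t₁, 0 < slope w t₁ x := hs.eventually_const_lt hu
  have hev' : ∀ᶠ x in 𝓝[<] t₁, 0 < slope w t₁ x :=
    hev.filter_mono (nhdsWithin_mono t₁ (fun x hx => ne_of_lt hx))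
  obtain ⟨x, hx1, hx2⟩ := (hev'.and eventually_mem_nhdsWithin).exists
  refine ⟨x, hx2, ?_⟩
  rw [slope_def_field, hw0, sub_zero] at hx1
  rcases div_pos_iff.mp hx1 with ⟨_, h2⟩ | ⟨h1, _⟩
  · exact absurd (sub_neg.2 hx2) (not_lt.2 h2.le)
  · exact h1

private lemma phi_bound {c x e : ℝ} (hc : 1 ≤ c) (hx : 0 ≤ x)
    (h : c * (x ^ 3 / 3 - x ^ 2) ≤ e) : x ≤ 3 + max e 0 / 3 := by
  by_contra hcon
  push_neg at hcon
  have hm0 : (0 : ℝ) ≤ max e 0 := le_max_right e 0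
  have hme : e ≤ max e 0 := le_max_left e 0
  have hx3 : 3 < x := by linarith
  have h1 : (9 : ℝ) < x ^ 2 := by nlinarith
  have h2 : max e 0 / 3 < x - 3 := by linarith
  have h4 : 3 * max e 0 < x ^ 2 * (x - 3) := by
    nlinarith [mul_nonneg (by linarith : (0:ℝ) ≤ x ^ 2 - 9) (by linarith : (0:ℝ) ≤ x - 3)]
  have h5 : (0 : ℝ) < x ^ 2 * (x - 3) / 3 := by nlinarith
  have h6 : max e 0 < c * (x ^ 3 / 3 - x ^ 2) := by
    have hq : x ^ 3 / 3 - x ^ 2 = x ^ 2 * (x - 3) / 3 := by ring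
    rw [hq]
    nlinarith [mul_le_mul_of_nonneg_right hc h5.le]
  linarith

private lemma core (c : ℝ) (hc : 1 ≤ c) (hcase : c = 1 ∨ 2 ≤ c) (w u : ℝ → ℝ)
    (hw : ∀ t, HasDerivAt w (u t) t)
    (hu : ∀ t, HasDerivAt u (-(c - 2 + w t) * u t - c * w t * (w t - 2)) t)
    (hpos : ∀ t, 0 ≤ w t) (T₀ : ℝ) :
    ∃ B : ℝ, ∀ t, T₀ ≤ t → w t ≤ B := by
  have hucont : Continuous u := cont_of_deriv hu
  have hwcont : Continuous w := cont_of_deriv hw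
  set E : ℝ → ℝ := fun t => u t ^ 2 / 2 + c * (w t ^ 3 / 3 - w t ^ 2) with hE_def
  have hE : ∀ t, HasDerivAt E (-(c - 2 + w t) * u t ^ 2) t := by
    intro t
    have h1 : HasDerivAt (fun t => u t ^ 2 / 2)
        ((2 * u t ^ 1 * (-(c - 2 + w t) * u t - c * w t * (w t - 2))) / 2) t :=
      ((hu t).pow 2).div_const 2
    have h2 : HasDerivAt (fun t => c * (w t ^ 3 / 3 - w t ^ 2))
        (c * ((3 * w t ^ 2 * u t) / 3 - 2 * w t ^ 1 * u t)) t := by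
      have h3 : HasDerivAt (fun t => w t ^ 3 / 3 - w t ^ 2)
          ((3 * w t ^ 2 * u t) / 3 - 2 * w t ^ 1 * u t) t := by
        have := (((hw t).pow 3).div_const 3).sub ((hw t).pow 2)
        exact this.congr_deriv (by simp)
      exact h3.const_mul c
    have := h1.add h2
    refine this.congr_deriv ?_
    push_cast
    ring
  have key : ∀ t, T₀ ≤ t → E t ≤ max (E T₀) 41 := by
    rcases hcase with hc1 | hc2
    · subst hc1
      -- K1 : a large negative velocity in the strip w ≤ 1 forces w < 0 later
      have K1 : ∀ t₀, w t₀ ≤ 1 → -3 < u t₀ := by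
        intro t₀ hw1
        by_contra hle
        push_neg at hle
        obtain ⟨v, hv3, hu0⟩ : ∃ v, 3 ≤ v ∧ u t₀ = -v := ⟨-u t₀, by linarith, by ring⟩
        have hv0 : (0:ℝ) < v := by linarith
        have hvne : v ≠ 0 := ne_of_gt hv0
        have hτ0 : (0:ℝ) < 2 / v := by positivity
        set S : Set ℝ := (Icc t₀ (t₀ + 2 / v) ∩ {s | u s = -v / 2}) ∪ {t₀ + 2 / v} with hS
        have hSclosed : IsClosed S :=
          (isClosed_Icc.inter (isClosed_eq hucont continuous_const)).union isClosed_singleton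
        have hSne : S.Nonempty := ⟨t₀ + 2 / v, Or.inr rfl⟩
        have hSbdd : BddBelow S := by
          refine ⟨t₀, fun x hx => ?_⟩
          rcases hx with ⟨hx1, _⟩ | hx2
          · exact hx1.1
          · simp only [mem_singleton_iff] at hx2; rw [hx2]; linarith
        set t₁ : ℝ := sInf S with ht₁def
        have ht₁S : t₁ ∈ S := hSclosed.csInf_mem hSne hSbdd
        have ht₁J : t₁ ∈ Icc t₀ (t₀ + 2 / v) := by
          rcases ht₁S with ⟨h1, _⟩ | h2
          · exact h1
          · simp only [mem_singleton_iff] at h2; rw [h2]; exact right_mem_Icc.2 (by linarith)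
        have hu_le : ∀ s ∈ Icc t₀ t₁, u s ≤ -v / 2 := by
          intro s hs
          by_contra hgt
          push_neg at hgt
          have hmem : -v / 2 ∈ Icc (u t₀) (u s) := ⟨by rw [hu0]; linarith, hgt.le⟩
          obtain ⟨x, hx, hux⟩ := intermediate_value_Icc hs.1 hucont.continuousOn hmem
          have hxS : x ∈ S := Or.inl ⟨⟨hx.1, le_trans (hx.2.trans hs.2) ht₁J.2⟩, hux⟩
          have hx_ge : t₁ ≤ x := csInf_le hSbdd hxS
          have hxs : x = s := le_antisymm hx.2 (hs.2.trans hx_ge)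
          rw [hxs] at hux
          linarith
        have hwle : ∀ s ∈ Icc t₀ t₁, w s ≤ 1 := by
          intro s hs
          have hws : w s ≤ w t₀ := by
            apply le_of_deriv_nonpos' hw hs.1
            intro x hx
            have := hu_le x ⟨hx.1.le, hx.2.le.trans hs.2⟩
            linarith
          linarith
        have hcomp : u t₁ - t₁ ≤ u t₀ - t₀ := by
          apply le_of_deriv_nonpos' (f := fun s => u s - s)
            (f' := fun s => (-(1 - 2 + w s) * u s - 1 * w s * (w s - 2)) - 1)
            (fun s => (hu s).sub (hasDerivAt_id s)) ht₁J.1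
          intro x hx
          have h1 := hu_le x ⟨hx.1.le, hx.2.le⟩
          have h2 := hwle x ⟨hx.1.le, hx.2.le⟩
          have h3 := hpos x
          nlinarith [mul_nonneg (by linarith : (0:ℝ) ≤ 1 - w x) (by linarith : (0:ℝ) ≤ -u x),
            sq_nonneg (w x - 1)]
        have hq9 : 2 / v ≤ 2 / 3 := div_le_div_of_nonneg_left (by norm_num) (by norm_num) hv3
        have hut₁ : u t₁ ≤ -v + 2 / v := by
          have h1 := ht₁J.2
          linarith [hu0]
        have hne : u t₁ ≠ -v / 2 := by
          intro heq
          rw [heq] at hut₁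
          linarith
        have ht₁eq : t₁ = t₀ + 2 / v := by
          rcases ht₁S with ⟨_, h2⟩ | h2
          · exact absurd h2 hne
          · simpa using h2
        have hwt₁ : w t₁ ≤ 0 := by
          have hmono : w t₁ + v / 2 * t₁ ≤ w t₀ + v / 2 * t₀ := by
            apply le_of_deriv_nonpos' (f := fun s => w s + v / 2 * s)
              (f' := fun s => u s + v / 2 * 1)
              (fun s => (hw s).add ((hasDerivAt_id s).const_mul (v / 2))) ht₁J.1
            intro x hx
            have := hu_le x ⟨hx.1.le, hx.2.le⟩
            linarith
          have h7 : v / 2 * t₁ = v / 2 * t₀ + 1 := by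
            rw [ht₁eq]; field_simp
          linarith
        have hw0 : w t₁ = 0 := le_antisymm hwt₁ (hpos t₁)
        have hun : u t₁ < 0 := by linarith
        obtain ⟨x, _, hwx⟩ := neg_after (hw t₁) hw0 hun
        exact absurd (hpos x) (not_le.2 hwx)
      -- K2 : a large positive velocity in the strip w ≤ 1 forces w < 0 earlier
      have K2 : ∀ t₀, w t₀ ≤ 1 → u t₀ < 9 := by
        intro t₀ hw1
        by_contra hle
        push_neg at hle
        obtain ⟨v, hv9, hu0⟩ : ∃ v, 9 ≤ v ∧ u t₀ = v := ⟨u t₀, hle, rfl⟩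
        have hv0 : (0:ℝ) < v := by linarith
        have hvne : v ≠ 0 := ne_of_gt hv0
        have hτ0 : (0:ℝ) < 2 / v := by positivity
        set S : Set ℝ := (Icc (t₀ - 2 / v) t₀ ∩ {s | u s = v / 2}) ∪ {t₀ - 2 / v} with hS
        have hSclosed : IsClosed S :=
          (isClosed_Icc.inter (isClosed_eq hucont continuous_const)).union isClosed_singleton
        have hSne : S.Nonempty := ⟨t₀ - 2 / v, Or.inr rfl⟩
        have hSbdd : BddAbove S := by
          refine ⟨t₀, fun x hx => ?_⟩
          rcases hx with ⟨hx1, _⟩ | hx2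
          · exact hx1.2
          · simp only [mem_singleton_iff] at hx2; rw [hx2]; linarith
        set t₁ : ℝ := sSup S with ht₁def
        have ht₁S : t₁ ∈ S := hSclosed.csSup_mem hSne hSbdd
        have ht₁J : t₁ ∈ Icc (t₀ - 2 / v) t₀ := by
          rcases ht₁S with ⟨h1, _⟩ | h2
          · exact h1
          · simp only [mem_singleton_iff] at h2; rw [h2]; exact left_mem_Icc.2 (by linarith)
        have hu_ge : ∀ s ∈ Icc t₁ t₀, v / 2 ≤ u s := by
          intro s hs
          by_contra hgt
          push_neg at hgt
          have hmem : v / 2 ∈ Icc (u s) (u t₀) := ⟨hgt.le, by rw [hu0]; linarith⟩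
          obtain ⟨x, hx, hux⟩ := intermediate_value_Icc hs.2 hucont.continuousOn hmem
          have hxS : x ∈ S := Or.inl ⟨⟨le_trans ht₁J.1 (hs.1.trans hx.1), hx.2⟩, hux⟩
          have hx_le : x ≤ t₁ := le_csSup hSbdd hxS
          have hxs : x = s := le_antisymm (hx_le.trans hs.1) hx.1
          rw [hxs] at hux
          linarith
        have hwle : ∀ s ∈ Icc t₁ t₀, w s ≤ 1 := by
          intro s hs
          have hws : w s ≤ w t₀ := by
            apply le_of_deriv_nonneg' hw hs.2
            intro x hx
            have := hu_ge x ⟨hs.1.trans hx.1.le, hx.2.le⟩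
            linarith
          linarith
        have hq : (u t₀ + 1) * Real.exp (-t₀) ≤ (u t₁ + 1) * Real.exp (-t₁) := by
          apply le_of_deriv_nonpos' (f := fun s => (u s + 1) * Real.exp (-s))
            (f' := fun s => (-(1 - 2 + w s) * u s - 1 * w s * (w s - 2)) * Real.exp (-s)
              + (u s + 1) * (Real.exp (-s) * -1))
            (fun s => ((hu s).add_const 1).mul
              ((Real.hasDerivAt_exp (-s)).comp s ((hasDerivAt_id s).neg))) ht₁J.2
          intro x hx
          have h1 := hu_ge x ⟨hx.1.le, hx.2.le⟩
          have h2 := hwle x ⟨hx.1.le, hx.2.le⟩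
          have h3 := hpos x
          have hexp : (0:ℝ) < Real.exp (-x) := Real.exp_pos _
          nlinarith [mul_nonneg (mul_nonneg h3 (by linarith : (0:ℝ) ≤ u x)) hexp.le,
            mul_nonneg (sq_nonneg (w x - 1)) hexp.le]
        have e1 : (v + 1) * Real.exp (t₁ - t₀) ≤ u t₁ + 1 := by
          have hpos' : (0:ℝ) < Real.exp (-t₁) := Real.exp_pos _
          have hsplit : Real.exp (-t₀) = Real.exp (t₁ - t₀) * Real.exp (-t₁) := by
            rw [← Real.exp_add]; ring_nf
          rw [hu0] at hq
          rw [hsplit] at hq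
          have := (mul_le_mul_iff_of_pos_right hpos').mp (by linarith [hq] : (v + 1) * Real.exp (t₁ - t₀) * Real.exp (-t₁) ≤ (u t₁ + 1) * Real.exp (-t₁))
          exact this
        have e2 : (t₁ - t₀) + 1 ≤ Real.exp (t₁ - t₀) := Real.add_one_le_exp _
        have e3 : t₀ - 2 / v ≤ t₁ := ht₁J.1
        have e4 : 2 / v ≤ 2 / 9 := div_le_div_of_nonneg_left (by norm_num) (by norm_num) hv9
        have h6 : (v + 1) * (2 / v) = 2 + 2 / v := by field_simp
        have hgt : v / 2 < u t₁ := by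
          nlinarith [mul_le_mul_of_nonneg_left e2 (by linarith : (0:ℝ) ≤ v + 1),
            mul_le_mul_of_nonneg_left (by linarith : -(2 / v) ≤ t₁ - t₀) (by linarith : (0:ℝ) ≤ v + 1)]
        have hne : u t₁ ≠ v / 2 := ne_of_gt hgt
        have ht₁eq : t₁ = t₀ - 2 / v := by
          rcases ht₁S with ⟨_, h2⟩ | h2
          · exact absurd h2 hne
          · simpa using h2
        have hwt₁ : w t₁ ≤ 0 := by
          have hmono : w t₁ - v / 2 * t₁ ≤ w t₀ - v / 2 * t₀ := by
            apply le_of_deriv_nonneg' (f := fun s => w s - v / 2 * s)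
              (f' := fun s => u s - v / 2 * 1)
              (fun s => (hw s).sub ((hasDerivAt_id s).const_mul (v / 2))) ht₁J.2
            intro x hx
            have := hu_ge x ⟨hx.1.le, hx.2.le⟩
            linarith
          have h7 : v / 2 * t₁ = v / 2 * t₀ - 1 := by
            rw [ht₁eq]; field_simp
          linarith
        have hw0 : w t₁ = 0 := le_antisymm hwt₁ (hpos t₁)
        have hun : (0:ℝ) < u t₁ := by linarith
        obtain ⟨x, _, hwx⟩ := neg_before (hw t₁) hw0 hun
        exact absurd (hpos x) (not_le.2 hwx)
      -- in the strip, energy is at most 41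
      have strip : ∀ t, w t ≤ 1 → E t ≤ 41 := by
        intro t hwt
        have h1 := K1 t hwt
        have h2 := K2 t hwt
        have h3 : u t ^ 2 < 81 := by nlinarith
        have h4 := hpos t
        simp only [hE_def]
        nlinarith [sq_nonneg (w t)]
      intro t ht
      by_cases hz : ∃ s, s ∈ Icc T₀ t ∧ w s ≤ 1
      · set Z : Set ℝ := Icc T₀ t ∩ {s | w s ≤ 1} with hZ
        have hZne : Z.Nonempty := by obtain ⟨s, h1, h2⟩ := hz; exact ⟨s, h1, h2⟩
        have hZclosed : IsClosed Z := isClosed_Icc.inter (isClosed_le hwcont continuous_const)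
        have hZbdd : BddAbove Z := ⟨t, fun x hx => hx.1.2⟩
        set s₁ : ℝ := sSup Z with hs₁
        have hs₁Z : s₁ ∈ Z := hZclosed.csSup_mem hZne hZbdd
        have hEs₁ : E s₁ ≤ 41 := strip s₁ hs₁Z.2
        have hEt : E t ≤ E s₁ := by
          apply le_of_deriv_nonpos' hE hs₁Z.1.2
          intro x hx
          have hwx : 1 < w x := by
            by_contra hle2
            push_neg at hle2
            have hmem : x ∈ Z := ⟨⟨hs₁Z.1.1.trans hx.1.le, hx.2.le⟩, hle2⟩
            exact absurd (le_csSup hZbdd hmem) (not_le.2 hx.1)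
          nlinarith [sq_nonneg (u x)]
        have : E t ≤ 41 := hEt.trans hEs₁
        exact this.trans (le_max_right _ _)
      · push_neg at hz
        have hEt : E t ≤ E T₀ := by
          apply le_of_deriv_nonpos' hE ht
          intro x hx
          have hwx : 1 < w x := hz x ⟨hx.1.le, hx.2.le⟩
          nlinarith [sq_nonneg (u x)]
        exact hEt.trans (le_max_left _ _)
    · intro t ht
      have hEt : E t ≤ E T₀ := by
        apply le_of_deriv_nonpos' hE ht
        intro x _
        nlinarith [sq_nonneg (u x), hpos x]
      exact hEt.trans (le_max_left _ _)
  refine ⟨3 + max (max (E T₀) 41) 0 / 3, ?_⟩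
  intro t ht
  have h1 := key t ht
  have h2 : c * (w t ^ 3 / 3 - w t ^ 2) ≤ E t := by
    simp only [hE_def]
    nlinarith [sq_nonneg (u t)]
  exact phi_bound hc (hpos t) (h2.trans h1)


/-- Lemma 6.7: quadratic decay of nonnegative radial steady states.
Let `n ≥ 3` and let `V ∈ C²((0,∞))` satisfy `V'' + ((n+1)/r)V' + nV² + rVV' = 0`
and `V ≥ 0` on `(0,∞)`. Then for every `ε > 0` there is `C = C(ε) > 0` with
`V(r) ≤ C r⁻²` on `(ε,∞)`. -/
theorem statement16
    (n : ℕ) (hn3 : 3 ≤ n)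
    (V : ℝ → ℝ)
    (hdiff : ∀ r : ℝ, 0 < r → DifferentiableAt ℝ V r ∧ DifferentiableAt ℝ (deriv V) r)
    (hode : ∀ r : ℝ, 0 < r →
      deriv (deriv V) r + (((n : ℝ) + 1) / r) * deriv V r + (n : ℝ) * V r ^ 2
        + r * V r * deriv V r = 0)
    (hnn : ∀ r : ℝ, 0 < r → 0 ≤ V r) :
    ∀ ε : ℝ, 0 < ε → ∃ C : ℝ, 0 < C ∧ ∀ r : ℝ, ε < r → V r ≤ C / r ^ 2 := by
  intro ε hε
  have hn3' : (3:ℝ) ≤ (n:ℝ) := by exact_mod_cast hn3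
  have hc1 : (1:ℝ) ≤ (n:ℝ) - 2 := by linarith
  have hcase : ((n:ℝ) - 2 = 1) ∨ (2 ≤ (n:ℝ) - 2) := by
    rcases eq_or_lt_of_le hn3 with h | h
    · left; rw [← h]; norm_num
    · right
      have h4 : (4:ℕ) ≤ n := h
      have h4' : (4:ℝ) ≤ (n:ℝ) := by exact_mod_cast h4
      linarith
  -- the rescaled mass function and its derivative
  have hW : ∀ t : ℝ, HasDerivAt (fun s => Real.exp s ^ 2 * V (Real.exp s))
      (2 * Real.exp t ^ 2 * V (Real.exp t) + Real.exp t ^ 3 * deriv V (Real.exp t)) t := by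
    intro t
    have he := Real.hasDerivAt_exp t
    have h1 : HasDerivAt (fun s => Real.exp s ^ 2) (2 * Real.exp t * Real.exp t) t := by
      exact (he.pow 2).congr_deriv (by simp)
    have h2 : HasDerivAt (fun s => V (Real.exp s)) (deriv V (Real.exp t) * Real.exp t) t :=
      HasDerivAt.comp t ((hdiff _ (Real.exp_pos t)).1.hasDerivAt) he
    have h12 := h1.mul h2
    refine h12.congr_deriv ?_
    ring
  have hU : ∀ t : ℝ, HasDerivAt
      (fun s => 2 * Real.exp s ^ 2 * V (Real.exp s) + Real.exp s ^ 3 * deriv V (Real.exp s))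
      (-(((n:ℝ) - 2) - 2 + Real.exp t ^ 2 * V (Real.exp t))
          * (2 * Real.exp t ^ 2 * V (Real.exp t) + Real.exp t ^ 3 * deriv V (Real.exp t))
        - ((n:ℝ) - 2) * (Real.exp t ^ 2 * V (Real.exp t))
          * (Real.exp t ^ 2 * V (Real.exp t) - 2)) t := by
    intro t
    have he := Real.hasDerivAt_exp t
    have h1 : HasDerivAt (fun s => Real.exp s ^ 2) (2 * Real.exp t * Real.exp t) t := by
      exact (he.pow 2).congr_deriv (by simp)
    have h2 : HasDerivAt (fun s => V (Real.exp s)) (deriv V (Real.exp t) * Real.exp t) t :=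
      HasDerivAt.comp t ((hdiff _ (Real.exp_pos t)).1.hasDerivAt) he
    have h3 : HasDerivAt (fun s => Real.exp s ^ 3) (3 * Real.exp t ^ 2 * Real.exp t) t := by
      exact (he.pow 3).congr_deriv (by simp)
    have h4 : HasDerivAt (fun s => deriv V (Real.exp s))
        (deriv (deriv V) (Real.exp t) * Real.exp t) t :=
      HasDerivAt.comp t ((hdiff _ (Real.exp_pos t)).2.hasDerivAt) he
    have p1 := (h1.const_mul (2:ℝ)).mul h2
    have p2 := h3.mul h4
    have raw := p1.add p2
    refine raw.congr_deriv ?_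
    have hr : (0:ℝ) < Real.exp t := Real.exp_pos t
    have h := hode _ hr
    have hdd : deriv (deriv V) (Real.exp t)
        = -((((n:ℝ)+1)/Real.exp t) * deriv V (Real.exp t) + (n:ℝ) * V (Real.exp t)^2
            + Real.exp t * V (Real.exp t) * deriv V (Real.exp t)) := by linarith
    rw [hdd]
    field_simp
    ring
  have hp : ∀ t : ℝ, 0 ≤ (fun s => Real.exp s ^ 2 * V (Real.exp s)) t := by
    intro t
    exact mul_nonneg (by positivity) (hnn _ (Real.exp_pos t))
  obtain ⟨B, hB⟩ := core ((n:ℝ) - 2) hc1 hcase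
    (fun s => Real.exp s ^ 2 * V (Real.exp s))
    (fun s => 2 * Real.exp s ^ 2 * V (Real.exp s) + Real.exp s ^ 3 * deriv V (Real.exp s))
    hW hU hp (Real.log ε)
  refine ⟨max B 1, lt_of_lt_of_le one_pos (le_max_right B 1), ?_⟩
  intro r hr
  have hr0 : (0:ℝ) < r := lt_trans hε hr
  have hlog : Real.log ε ≤ Real.log r := Real.log_le_log hε (le_of_lt hr)
  have h := hB (Real.log r) hlog
  simp only [Real.exp_log hr0] at h
  rw [le_div_iff₀ (by positivity : (0:ℝ) < r ^ 2)]
  nlinarith [h, le_max_left B 1]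
end
end

section
/- Let n ≥ 3, α > 0, and let φ be the maximal solution of the initial value problem φ'' + ((n+1)/y − y/2)φ' + nφ² + yφφ' − φ = 0 on (0, y*), φ(0) = α, φ'(0) = 0, where y* = y*_α ∈ (0,∞] is the maximal existence time (i.e., φ is a C² solution on [0, y*) which cannot be extended to a C² solution on any larger interval). If y* < ∞, then either lim_{y→y*⁻} φ(y) = +∞ or lim_{y→y*⁻} φ(y) = −∞. -/
open Real Set Filter
open scoped Topology

noncomputable section

/-- `φ` is a `C²` solution on `[0,b)` of the self-similar profile equation
`φ'' + ((n+1)/y - y/2)φ' + nφ² + yφφ' - φ = 0` with `φ(0) = α`, `φ'(0) = 0`. -/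
def IsPhiSolOn (n : ℕ) (α b : ℝ) (φ : ℝ → ℝ) : Prop :=
  φ 0 = α ∧ deriv φ 0 = 0 ∧
    (∀ y : ℝ, 0 ≤ y → y < b →
      DifferentiableAt ℝ φ y ∧ DifferentiableAt ℝ (deriv φ) y) ∧
    ContinuousOn (deriv (deriv φ)) (Ico (0:ℝ) b) ∧
    ∀ y : ℝ, 0 < y → y < b →
      deriv (deriv φ) y + (((n : ℝ) + 1) / y - y / 2) * deriv φ y
        + (n : ℝ) * φ y ^ 2 + y * φ y * deriv φ y - φ y = 0

/-- the coefficient of `φ'` in the equation -/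
def Aco (n : ℕ) (y : ℝ) : ℝ := ((n : ℝ) + 1) / y - y / 2

/-- the first-order system vector field associated to the equation -/
def Fv (n : ℕ) (y : ℝ) (x : ℝ × ℝ) : ℝ × ℝ :=
  (x.2, -Aco n y * x.2 - (n : ℝ) * x.1 ^ 2 - y * x.1 * x.2 + x.1)

lemma cube_le_cube {a b : ℝ} (h : a ≤ b) : a ^ 3 ≤ b ^ 3 := by
  nlinarith [sq_nonneg (a + b), sq_nonneg (a - b), sq_nonneg a, sq_nonneg b]

lemma abs_le_of_sq_le {u S : ℝ} (hS : 0 ≤ S) (h : u ^ 2 ≤ S) : |u| ≤ S + 1 := by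
  rcases le_or_gt (|u|) 1 with h1 | h1
  · linarith
  · calc |u| ≤ |u| ^ 2 := by nlinarith [abs_nonneg u]
      _ = u ^ 2 := sq_abs u
      _ ≤ S + 1 := by linarith

lemma coercive_G {n : ℕ} (hn3 : 3 ≤ n) {x B : ℝ} (h : (n : ℝ) * x ^ 3 / 3 - x ^ 2 / 2 ≤ B) :
    x ≤ 2 * |B| + 2 := by
  have hn : (3 : ℝ) ≤ (n : ℝ) := by exact_mod_cast hn3
  have hB : B ≤ |B| := le_abs_self B
  have hB0 : 0 ≤ |B| := abs_nonneg B
  by_contra hx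
  push_neg at hx
  have hx2 : 2 ≤ x := by linarith
  have h1 : 0 ≤ x ^ 3 * ((n : ℝ) - 3) :=
    mul_nonneg (by nlinarith) (by linarith)
  have h2 : 0 ≤ (x - 2) * x ^ 2 := mul_nonneg (by linarith) (sq_nonneg x)
  have h3 : 0 ≤ (x - 2) * x := mul_nonneg (by linarith) (by linarith)
  -- from these: n*x^3/3 - x^2/2 ≥ x
  nlinarith
lemma lower_G {n : ℕ} (hn3 : 3 ≤ n) {m x : ℝ} (hm : m ≤ 0) (hx : m ≤ x) :
    -((n : ℝ) * (-m) ^ 3 + m ^ 2 + 1) ≤ (n : ℝ) * x ^ 3 / 3 - x ^ 2 / 2 := by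
  have hn : (3 : ℝ) ≤ (n : ℝ) := by exact_mod_cast hn3
  have hm0 : 0 ≤ -m := by linarith
  have hnm : 0 ≤ (n : ℝ) * (-m) ^ 3 := mul_nonneg (by linarith) (by positivity)
  rcases le_or_gt x 1 with h1 | h1
  · have hc : m ^ 3 ≤ x ^ 3 := cube_le_cube hx
    have hx2 : x ^ 2 ≤ m ^ 2 + 1 := by nlinarith [mul_nonneg (sub_nonneg.2 hx) (sub_nonneg.2 h1)]
    have hm3 : m ^ 3 ≤ 0 := by nlinarith [sq_nonneg m]
    nlinarith
  · have h2 : 0 ≤ x ^ 3 * ((n : ℝ) - 3) := mul_nonneg (pow_nonneg (by linarith) 3) (by linarith)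
    have h3 : 0 ≤ x ^ 2 * (x - 1) := mul_nonneg (sq_nonneg x) (by linarith)
    nlinarith [sq_nonneg x]

lemma Aco_abs_le {n : ℕ} {c T t : ℝ} (hc : 0 < c) (ht : t ∈ Icc c T) :
    |Aco n t| ≤ ((n : ℝ) + 1) / c + T / 2 := by
  have ht0 : 0 < t := lt_of_lt_of_le hc ht.1
  have h1 : 0 < ((n : ℝ) + 1) / t := by positivity
  have h2 : ((n : ℝ) + 1) / t ≤ ((n : ℝ) + 1) / c :=
    div_le_div_of_nonneg_left (by positivity) hc ht.1
  have h3 : t / 2 ≤ T / 2 := by linarith [ht.2]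
  rw [abs_le]
  unfold Aco
  constructor <;> nlinarith
lemma normPair_le {x : ℝ × ℝ} {r : ℝ} (hx : x ∈ Metric.closedBall (0 : ℝ × ℝ) r) :
    |x.1| ≤ r ∧ |x.2| ≤ r := by
  rw [mem_closedBall_zero_iff, Prod.norm_def] at hx
  simp only [Real.norm_eq_abs] at hx
  exact ⟨le_trans (le_max_left _ _) hx, le_trans (le_max_right _ _) hx⟩

lemma Fv_norm_le {n : ℕ} {c T ρ1 t : ℝ} (hc : 0 < c) (hρ1 : 0 ≤ ρ1) (hT : 0 ≤ T)
    (ht : t ∈ Icc c T) {x : ℝ × ℝ} (hx : x ∈ Metric.closedBall (0 : ℝ × ℝ) ρ1) :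
    ‖Fv n t x‖ ≤ (((n : ℝ) + 1) / c + T / 2) * ρ1 + (n : ℝ) * ρ1 ^ 2 + T * ρ1 ^ 2 + 2 * ρ1 := by
  obtain ⟨h1, h2⟩ := normPair_le hx
  have hA := Aco_abs_le (n := n) hc ht
  have hA0 : (0:ℝ) ≤ ((n : ℝ) + 1) / c + T / 2 := le_trans (abs_nonneg _) hA
  have hn0 : (0:ℝ) ≤ (n : ℝ) := Nat.cast_nonneg n
  have ht0 : 0 < t := lt_of_lt_of_le hc ht.1
  rw [Prod.norm_def]
  apply max_le
  · simp only [Real.norm_eq_abs, Fv]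
    nlinarith [mul_nonneg hA0 hρ1, mul_nonneg hn0 (sq_nonneg ρ1), mul_nonneg hT (sq_nonneg ρ1)]
  · simp only [Real.norm_eq_abs, Fv]
    have e1 : |(-Aco n t) * x.2| ≤ (((n : ℝ) + 1) / c + T / 2) * ρ1 := by
      rw [abs_mul, abs_neg]
      exact mul_le_mul hA h2 (abs_nonneg _) hA0
    have e2 : |(n : ℝ) * x.1 ^ 2| ≤ (n : ℝ) * ρ1 ^ 2 := by
      rw [abs_mul, abs_pow, Nat.abs_cast]
      exact mul_le_mul_of_nonneg_left (by nlinarith [abs_nonneg x.1]) hn0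
    have e3 : |t * x.1 * x.2| ≤ T * ρ1 ^ 2 := by
      rw [abs_mul, abs_mul, abs_of_pos ht0]
      have : |x.1| * |x.2| ≤ ρ1 * ρ1 := mul_le_mul h1 h2 (abs_nonneg _) hρ1
      nlinarith [abs_nonneg x.1, abs_nonneg x.2, mul_le_mul_of_nonneg_left this ht0.le,
        mul_le_mul_of_nonneg_right ht.2 (mul_nonneg (abs_nonneg x.1) (abs_nonneg x.2)),
        mul_le_mul_of_nonneg_left (mul_le_mul h1 h2 (abs_nonneg _) hρ1) hT]
    calc |(-Aco n t * x.2 - (n : ℝ) * x.1 ^ 2 - t * x.1 * x.2 + x.1)|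
        ≤ |(-Aco n t) * x.2| + |(n : ℝ) * x.1 ^ 2| + |t * x.1 * x.2| + |x.1| := by
          have := abs_add_le (-Aco n t * x.2 - (n : ℝ) * x.1 ^ 2 - t * x.1 * x.2) x.1
          have h4 := abs_sub (-Aco n t * x.2 - (n : ℝ) * x.1 ^ 2) (t * x.1 * x.2)
          have h5 := abs_sub (-Aco n t * x.2) ((n : ℝ) * x.1 ^ 2)
          calc |(-Aco n t * x.2 - (n : ℝ) * x.1 ^ 2 - t * x.1 * x.2 + x.1)|
              ≤ |(-Aco n t * x.2 - (n : ℝ) * x.1 ^ 2 - t * x.1 * x.2)| + |x.1| := abs_add_le _ _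
            _ ≤ |(-Aco n t * x.2 - (n : ℝ) * x.1 ^ 2)| + |t * x.1 * x.2| + |x.1| := by
                linarith [abs_sub (-Aco n t * x.2 - (n : ℝ) * x.1 ^ 2) (t * x.1 * x.2)]
            _ ≤ |(-Aco n t) * x.2| + |(n : ℝ) * x.1 ^ 2| + |t * x.1 * x.2| + |x.1| := by
                linarith [abs_sub (-Aco n t * x.2) ((n : ℝ) * x.1 ^ 2)]
      _ ≤ (((n : ℝ) + 1) / c + T / 2) * ρ1 + (n : ℝ) * ρ1 ^ 2 + T * ρ1 ^ 2 + 2 * ρ1 := by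
          linarith

lemma Fv_lipschitz {n : ℕ} {c T ρ1 t : ℝ} (hc : 0 < c) (hρ1 : 0 ≤ ρ1) (hT : 0 ≤ T)
    (ht : t ∈ Icc c T) :
    LipschitzOnWith
      (Real.toNNReal (((n : ℝ) + 1) / c + T / 2 + 2 * (n : ℝ) * ρ1 + 2 * T * ρ1 + 1))
      (Fv n t) (Metric.closedBall (0 : ℝ × ℝ) ρ1) := by
  have hA := Aco_abs_le (n := n) hc ht
  have hA0 : (0:ℝ) ≤ ((n : ℝ) + 1) / c + T / 2 := le_trans (abs_nonneg _) hA
  have hn0 : (0:ℝ) ≤ (n : ℝ) := Nat.cast_nonneg n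
  have ht0 : 0 < t := lt_of_lt_of_le hc ht.1
  set L0 : ℝ := ((n : ℝ) + 1) / c + T / 2 + 2 * (n : ℝ) * ρ1 + 2 * T * ρ1 + 1 with hL0
  have hL0nn : 0 ≤ L0 := by
    rw [hL0]; nlinarith [mul_nonneg (mul_nonneg (by norm_num : (0:ℝ) ≤ 2) hn0) hρ1,
      mul_nonneg (mul_nonneg (by norm_num : (0:ℝ) ≤ 2) hT) hρ1]
  apply LipschitzOnWith.of_dist_le_mul
  intro x hx y hy
  rw [Real.coe_toNNReal _ hL0nn]
  obtain ⟨hx1, hx2⟩ := normPair_le hx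
  obtain ⟨hy1, hy2⟩ := normPair_le hy
  set d : ℝ := dist x y with hd
  have hd0 : 0 ≤ d := dist_nonneg
  have he1 : |x.1 - y.1| ≤ d := by
    rw [hd, Prod.dist_eq]
    exact le_trans (le_of_eq (Real.dist_eq x.1 y.1).symm) (le_max_left _ _)
  have he2 : |x.2 - y.2| ≤ d := by
    rw [hd, Prod.dist_eq]
    exact le_trans (le_of_eq (Real.dist_eq x.2 y.2).symm) (le_max_right _ _)
  rw [Prod.dist_eq]
  apply max_le
  · rw [Real.dist_eq]
    show |(Fv n t x).1 - (Fv n t y).1| ≤ L0 * d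
    simp only [Fv]
    have : (1:ℝ) * d ≤ L0 * d := by
      apply mul_le_mul_of_nonneg_right _ hd0
      rw [hL0]
      nlinarith [mul_nonneg (mul_nonneg (by norm_num : (0:ℝ) ≤ 2) hn0) hρ1,
        mul_nonneg (mul_nonneg (by norm_num : (0:ℝ) ≤ 2) hT) hρ1]
    linarith [he2]
  · rw [Real.dist_eq]
    show |(Fv n t x).2 - (Fv n t y).2| ≤ L0 * d
    simp only [Fv]
    have hX : -Aco n t * x.2 - (n : ℝ) * x.1 ^ 2 - t * x.1 * x.2 + x.1
        - (-Aco n t * y.2 - (n : ℝ) * y.1 ^ 2 - t * y.1 * y.2 + y.1)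
        = (-Aco n t) * (x.2 - y.2) + (-(n : ℝ)) * ((x.1 + y.1) * (x.1 - y.1))
          + (-t) * (x.1 * (x.2 - y.2) + y.2 * (x.1 - y.1)) + (x.1 - y.1) := by ring
    rw [hX]
    have b1 : |(-Aco n t) * (x.2 - y.2)| ≤ (((n : ℝ) + 1) / c + T / 2) * d := by
      rw [abs_mul, abs_neg]
      exact mul_le_mul hA he2 (abs_nonneg _) hA0
    have b2 : |(-(n : ℝ)) * ((x.1 + y.1) * (x.1 - y.1))| ≤ (n : ℝ) * (2 * ρ1) * d := by
      rw [abs_mul, abs_neg, Nat.abs_cast, abs_mul]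
      have h1 : |x.1 + y.1| ≤ 2 * ρ1 := le_trans (abs_add_le _ _) (by linarith)
      have h2 : |x.1 + y.1| * |x.1 - y.1| ≤ (2 * ρ1) * d :=
        mul_le_mul h1 he1 (abs_nonneg _) (by linarith)
      rw [mul_assoc]
      exact mul_le_mul_of_nonneg_left h2 hn0
    have b3 : |(-t) * (x.1 * (x.2 - y.2) + y.2 * (x.1 - y.1))| ≤ 2 * T * ρ1 * d := by
      rw [abs_mul, abs_neg, abs_of_pos ht0]
      have h1 : |x.1 * (x.2 - y.2)| ≤ ρ1 * d := by
        rw [abs_mul]; exact mul_le_mul hx1 he2 (abs_nonneg _) hρ1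
      have h2 : |y.2 * (x.1 - y.1)| ≤ ρ1 * d := by
        rw [abs_mul]; exact mul_le_mul hy2 he1 (abs_nonneg _) hρ1
      have h3 : |x.1 * (x.2 - y.2) + y.2 * (x.1 - y.1)| ≤ 2 * (ρ1 * d) :=
        le_trans (abs_add_le _ _) (by linarith)
      calc t * |x.1 * (x.2 - y.2) + y.2 * (x.1 - y.1)| ≤ T * (2 * (ρ1 * d)) := by
            apply mul_le_mul ht.2 h3 (abs_nonneg _) hT
        _ = 2 * T * ρ1 * d := by ring
    calc |(-Aco n t) * (x.2 - y.2) + (-(n : ℝ)) * ((x.1 + y.1) * (x.1 - y.1))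
          + (-t) * (x.1 * (x.2 - y.2) + y.2 * (x.1 - y.1)) + (x.1 - y.1)|
        ≤ |(-Aco n t) * (x.2 - y.2) + (-(n : ℝ)) * ((x.1 + y.1) * (x.1 - y.1))
          + (-t) * (x.1 * (x.2 - y.2) + y.2 * (x.1 - y.1))| + |x.1 - y.1| := abs_add_le _ _
      _ ≤ |(-Aco n t) * (x.2 - y.2) + (-(n : ℝ)) * ((x.1 + y.1) * (x.1 - y.1))|
          + |(-t) * (x.1 * (x.2 - y.2) + y.2 * (x.1 - y.1))| + |x.1 - y.1| := by
            linarith [abs_add_le ((-Aco n t) * (x.2 - y.2) + (-(n : ℝ)) * ((x.1 + y.1) * (x.1 - y.1)))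
              ((-t) * (x.1 * (x.2 - y.2) + y.2 * (x.1 - y.1)))]
      _ ≤ |(-Aco n t) * (x.2 - y.2)| + |(-(n : ℝ)) * ((x.1 + y.1) * (x.1 - y.1))|
          + |(-t) * (x.1 * (x.2 - y.2) + y.2 * (x.1 - y.1))| + |x.1 - y.1| := by
            linarith [abs_add_le ((-Aco n t) * (x.2 - y.2))
              ((-(n : ℝ)) * ((x.1 + y.1) * (x.1 - y.1)))]
      _ ≤ L0 * d := by rw [hL0]; nlinarith [b1, b2, b3, he1]

lemma pl_exists_mem {E : Type*} [NormedAddCommGroup E] [NormedSpace ℝ E] [CompleteSpace E]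
    {v : ℝ → E → E} {tMin t₀ tMax : ℝ} (ht₀ : t₀ ∈ Icc tMin tMax) (x₀ : E) {a L K : NNReal}
    (hpl : IsPicardLindelof v (⟨t₀, ht₀⟩ : Icc tMin tMax) x₀ a 0 L K) :
    ∃ f : ℝ → E, f t₀ = x₀ ∧ ∀ t ∈ Icc tMin tMax,
      f t ∈ Metric.closedBall x₀ a ∧ HasDerivWithinAt f (v t (f t)) (Icc tMin tMax) t := by
  obtain ⟨α, hα⟩ := ODE.FunSpace.exists_isFixedPt_next hpl (Metric.mem_closedBall_self le_rfl)
  refine ⟨α.compProj, ?_, fun t ht => ⟨α.compProj_mem_closedBall hpl.mul_max_le, ?_⟩⟩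
  · show α.compProj ((⟨t₀, ht₀⟩ : Icc tMin tMax) : ℝ) = x₀
    rw [ODE.FunSpace.compProj_val, ← hα, ODE.FunSpace.next_apply₀]
  · apply ODE.hasDerivWithinAt_picard_Icc ht₀ hpl.continuousOn_uncurry
      α.continuous_compProj.continuousOn (fun _ ht' => α.compProj_mem_closedBall hpl.mul_max_le)
      x₀ ht |>.congr_of_mem _ ht
    intro t' ht'
    nth_rw 1 [← hα]
    rw [ODE.FunSpace.compProj_of_mem ht', ODE.FunSpace.next_apply]

lemma hasDerivAt_fst {f : ℝ → ℝ × ℝ} {p : ℝ × ℝ} {y : ℝ} (h : HasDerivAt f p y) :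
    HasDerivAt (fun z => (f z).1) p.1 y := by
  have := (hasDerivAt_iff_hasFDerivAt.1 h).fst
  simpa using this.hasDerivAt

lemma hasDerivAt_snd {f : ℝ → ℝ × ℝ} {p : ℝ × ℝ} {y : ℝ} (h : HasDerivAt f p y) :
    HasDerivAt (fun z => (f z).2) p.2 y := by
  have := (hasDerivAt_iff_hasFDerivAt.1 h).snd
  simpa using this.hasDerivAt

/-- the energy of the profile equation -/
def EngF (n : ℕ) (φ : ℝ → ℝ) (y : ℝ) : ℝ :=
  (deriv φ y) ^ 2 / 2 + (n : ℝ) * (φ y) ^ 3 / 3 - (φ y) ^ 2 / 2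

/-- its derivative along solutions -/
def EngdF (n : ℕ) (φ : ℝ → ℝ) (y : ℝ) : ℝ :=
  -((((n : ℝ) + 1) / y - y / 2) + y * φ y) * (deriv φ y) ^ 2

variable {n : ℕ} {α ystar : ℝ} {φ : ℝ → ℝ}

lemma neg_invariant (hn3 : 3 ≤ n) (hy : 0 < ystar) (hsol : IsPhiSolOn n α ystar φ)
    {y₀ : ℝ} (h0 : 0 < y₀) (h1 : y₀ < ystar) (hφ : φ y₀ < 0) (hD : deriv φ y₀ < 0) :
    ∀ y ∈ Ico y₀ ystar, deriv φ y < 0 := by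
  obtain ⟨hφ0, hD0, hdiff, hcont, hODE⟩ := hsol
  rintro t ⟨hty₀, htstar⟩
  by_contra ht
  push_neg at ht
  -- the set of points in [y₀, t] where the derivative is ≥ 0
  set S : Set ℝ := {y ∈ Icc y₀ t | 0 ≤ deriv φ y} with hS
  have hDcont : ContinuousOn (deriv φ) (Icc y₀ t) := fun y hy =>
    ((hdiff y (h0.le.trans hy.1) (lt_of_le_of_lt hy.2 htstar)).2.continuousAt).continuousWithinAt
  have hScl : IsClosed S := by
    have := hDcont.preimage_isClosed_of_isClosed isClosed_Icc (isClosed_Ici (a := (0:ℝ)))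
    exact this
  have hSne : S.Nonempty := ⟨t, ⟨hty₀, le_refl t⟩, ht⟩
  have hSbdd : BddBelow S := ⟨y₀, fun y hy => hy.1.1⟩
  set z := sInf S with hz
  have hzS : z ∈ S := hScl.csInf_mem hSne hSbdd
  have hzIcc : z ∈ Icc y₀ t := hzS.1
  have hzystar : z < ystar := lt_of_le_of_lt hzIcc.2 htstar
  have hz0 : 0 < z := lt_of_lt_of_le h0 hzIcc.1
  have hy₀z : y₀ < z := by
    rcases lt_or_eq_of_le hzIcc.1 with h | h
    · exact h
    · exact absurd (h ▸ hzS.2) (not_le.mpr hD)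
  have hlt : ∀ y ∈ Ico y₀ z, deriv φ y < 0 := by
    rintro y ⟨hy1, hy2⟩
    by_contra hy
    push_neg at hy
    exact absurd (csInf_le hSbdd ⟨⟨hy1, le_trans hy2.le hzIcc.2⟩, hy⟩) (not_le.mpr hy2)
  -- deriv φ z = 0
  have hDz0 : deriv φ z = 0 := by
    have hca : ContinuousAt (deriv φ) z :=
      (hdiff z hz0.le hzystar).2.continuousAt
    have htd : Tendsto (deriv φ) (𝓝[<] z) (𝓝 (deriv φ z)) :=
      hca.continuousWithinAt.tendsto
    have hev : ∀ᶠ y in 𝓝[<] z, deriv φ y ≤ 0 := by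
      filter_upwards [Ioo_mem_nhdsLT_of_mem (⟨hy₀z, le_refl z⟩ : z ∈ Ioc y₀ z)] with y hy
      exact (hlt y ⟨hy.1.le, hy.2⟩).le
    exact le_antisymm (le_of_tendsto htd hev) hzS.2
  -- φ z < 0
  have hφz : φ z < 0 := by
    have hanti : StrictAntiOn φ (Icc y₀ z) := by
      apply strictAntiOn_of_deriv_neg (convex_Icc _ _)
      · exact fun y hy => ((hdiff y (h0.le.trans hy.1)
          (lt_of_le_of_lt hy.2 hzystar)).1.continuousAt).continuousWithinAt
      · intro y hy
        rw [interior_Icc] at hy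
        exact hlt y ⟨hy.1.le, hy.2⟩
    have := hanti (left_mem_Icc.mpr hy₀z.le) (right_mem_Icc.mpr hy₀z.le) hy₀z
    linarith
  -- second derivative at z from the ODE
  have hD2z : deriv (deriv φ) z = φ z - (n : ℝ) * φ z ^ 2 := by
    have := hODE z hz0 hzystar
    rw [hDz0] at this
    ring_nf at this ⊢
    linarith
  have hD2neg : deriv (deriv φ) z < 0 := by
    have : (0:ℝ) ≤ (n : ℝ) * φ z ^ 2 := by positivity
    linarith [hD2z]
  -- but the left slope of deriv φ at z is nonneg
  have hD2nonneg : 0 ≤ deriv (deriv φ) z := by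
    have hder : HasDerivAt (deriv φ) (deriv (deriv φ) z) z :=
      (hdiff z hz0.le hzystar).2.hasDerivAt
    have hslope : Tendsto (slope (deriv φ) z) (𝓝[<] z) (𝓝 (deriv (deriv φ) z)) :=
      (hasDerivAt_iff_tendsto_slope.1 hder).mono_left
        (nhdsWithin_mono _ (fun y (hy : y < z) => ne_of_lt hy))
    refine ge_of_tendsto hslope ?_
    filter_upwards [Ioo_mem_nhdsLT_of_mem (⟨hy₀z, le_refl z⟩ : z ∈ Ioc y₀ z)] with y hy
    rw [slope_def_field, hDz0]
    have h1 : deriv φ y < 0 := hlt y ⟨hy.1.le, hy.2⟩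
    have h2 : y - z < 0 := by linarith [hy.2]
    have := div_nonneg_of_nonpos (by linarith : deriv φ y - 0 ≤ 0) h2.le
    simpa using this
  linarith


set_option maxHeartbeats 1000000 in
lemma energy_bound (hn3 : 3 ≤ n) (hy : 0 < ystar) (hsol : IsPhiSolOn n α ystar φ)
    {c m : ℝ} (hc : 0 < c) (hcy : c < ystar) (hm : m ≤ 0)
    (hlow : ∀ y ∈ Ico c ystar, m ≤ φ y) :
    ∃ ρ : ℝ, 0 < ρ ∧ ∀ y ∈ Ico c ystar, |φ y| ≤ ρ ∧ |deriv φ y| ≤ ρ := by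
  obtain ⟨hφ0, hD0, hdiff, hcont, hODE⟩ := hsol
  have hn : (3 : ℝ) ≤ (n : ℝ) := by exact_mod_cast hn3
  have hm0 : 0 ≤ -m := by linarith
  -- derivative of the energy
  have hEng : ∀ y, 0 < y → y < ystar → HasDerivAt (EngF n φ) (EngdF n φ y) y := by
    intro y h1 h2
    have hφd : HasDerivAt φ (deriv φ y) y := (hdiff y h1.le h2).1.hasDerivAt
    have hDd : HasDerivAt (deriv φ) (deriv (deriv φ) y) y := (hdiff y h1.le h2).2.hasDerivAt
    have h := (((hDd.pow 2).div_const 2).add (((hφd.pow 3)).const_mul ((n : ℝ)) |>.div_const 3)).sub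
      ((hφd.pow 2).div_const 2)
    refine h.congr_deriv ?_
    have e := hODE y h1 h2
    have hD2 : deriv (deriv φ) y = -((((n : ℝ) + 1) / y - y / 2)) * deriv φ y
        - (n : ℝ) * φ y ^ 2 - y * φ y * deriv φ y + φ y := by linarith
    unfold EngdF
    rw [hD2]
    ring
  -- constants
  obtain ⟨K2, hK2def⟩ : ∃ x : ℝ, x = ((n : ℝ) + 1) / c + ystar / 2 + ystar * (-m) + 1 := ⟨_, rfl⟩
  have hncpos : 0 < ((n : ℝ) + 1) / c := by positivity
  have hym : 0 ≤ ystar * -m := mul_nonneg hy.le hm0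
  have hK2 : 1 ≤ K2 := by rw [hK2def]; linarith
  obtain ⟨Cg, hCgdef⟩ : ∃ x : ℝ, x = (n : ℝ) * (-m) ^ 3 + m ^ 2 + 1 := ⟨_, rfl⟩
  have hnm3 : 0 ≤ (n : ℝ) * (-m) ^ 3 := mul_nonneg (by linarith) (by positivity)
  have hCg : 1 ≤ Cg := by rw [hCgdef]; nlinarith [sq_nonneg m]
  obtain ⟨K, hKdef⟩ : ∃ x : ℝ, x = 2 * K2 := ⟨_, rfl⟩
  obtain ⟨ε, hεdef⟩ : ∃ x : ℝ, x = 2 * K2 * Cg := ⟨_, rfl⟩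
  have hKpos : 0 < K := by rw [hKdef]; linarith
  have hεpos : 0 < ε := by rw [hεdef]; nlinarith
  -- pointwise differential inequality
  have hbound : ∀ y ∈ Ico c ystar, EngdF n φ y ≤ K * EngF n φ y + ε := by
    rintro y ⟨hy1, hy2⟩
    have hy0 : 0 < y := lt_of_lt_of_le hc hy1
    have hA : -((((n : ℝ) + 1) / y - y / 2) + y * φ y) ≤ K2 := by
      have h1 : 0 ≤ ((n : ℝ) + 1) / y := by positivity
      have h3 : y * m ≤ y * φ y := mul_le_mul_of_nonneg_left (hlow y ⟨hy1, hy2⟩) hy0.le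
      have h6 : y * (-m) ≤ ystar * (-m) := mul_le_mul_of_nonneg_right hy2.le hm0
      rw [hK2def]
      nlinarith
    have hGlow : -Cg ≤ (n : ℝ) * (φ y) ^ 3 / 3 - (φ y) ^ 2 / 2 :=
      hCgdef ▸ lower_G hn3 hm (hlow y ⟨hy1, hy2⟩)
    have hsq : 0 ≤ (deriv φ y) ^ 2 := sq_nonneg _
    have hD2b : (deriv φ y) ^ 2 ≤ 2 * (EngF n φ y + Cg) := by
      unfold EngF; nlinarith
    calc EngdF n φ y ≤ K2 * (deriv φ y) ^ 2 := by
          unfold EngdF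
          exact mul_le_mul_of_nonneg_right hA hsq
      _ ≤ K2 * (2 * (EngF n φ y + Cg)) := mul_le_mul_of_nonneg_left hD2b (by linarith)
      _ = K * EngF n φ y + ε := by rw [hKdef, hεdef]; ring
  -- Gronwall: energy bounded on [c, ystar)
  obtain ⟨δ, hδdef⟩ : ∃ x : ℝ, x = EngF n φ c := ⟨_, rfl⟩
  obtain ⟨B, hBdef⟩ : ∃ x : ℝ, x = |δ| * exp (K * (ystar - c)) + ε / K * exp (K * (ystar - c)) := ⟨_, rfl⟩
  have hB0 : 0 ≤ B := by rw [hBdef]; positivity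
  have hEngB : ∀ y ∈ Ico c ystar, EngF n φ y ≤ B := by
    rintro b' ⟨hb1, hb2⟩
    have key : ∀ x ∈ Icc c b', EngF n φ x ≤ gronwallBound δ K ε (x - c) := by
      apply le_gronwallBound_of_liminf_deriv_right_le (f' := EngdF n φ)
      · intro x hx
        exact ((hEng x (lt_of_lt_of_le hc hx.1)
          (lt_of_le_of_lt hx.2 hb2)).continuousAt).continuousWithinAt
      · intro x hx r hr
        have hd : HasDerivWithinAt (EngF n φ) (EngdF n φ x) (Ici x) x :=
          (hEng x (lt_of_lt_of_le hc hx.1) (lt_trans hx.2 hb2)).hasDerivWithinAt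
        refine (hd.liminf_right_slope_le hr).mono fun z hz => ?_
        rwa [slope_def_field, div_eq_inv_mul] at hz
      · exact hδdef.ge
      · exact fun x hx => hbound x ⟨hx.1, lt_trans hx.2 hb2⟩
    have h1 := key b' ⟨hb1, le_refl b'⟩
    have h2 : gronwallBound δ K ε (b' - c) ≤ B := by
      rw [gronwallBound_of_K_ne_0 (ne_of_gt hKpos)]
      have he : exp (K * (b' - c)) ≤ exp (K * (ystar - c)) :=
        exp_le_exp.2 (mul_le_mul_of_nonneg_left (by linarith) hKpos.le)
      have he0 : 0 < exp (K * (b' - c)) := exp_pos _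
      have hδa : δ ≤ |δ| := le_abs_self δ
      have hδ0 : 0 ≤ |δ| := abs_nonneg δ
      have hεK : 0 < ε / K := by positivity
      have t1 : δ * exp (K * (b' - c)) ≤ |δ| * exp (K * (ystar - c)) :=
        mul_le_mul hδa he he0.le hδ0
      have t2 : ε / K * (exp (K * (b' - c)) - 1) ≤ ε / K * exp (K * (ystar - c)) :=
        mul_le_mul_of_nonneg_left (by linarith) hεK.le
      rw [hBdef]; linarith
    linarith
  -- extract bounds on φ and deriv φ
  refine ⟨(2 * (B + Cg) + 1) + (2 * |B| + 2) + (-m) + 1, by positivity, ?_⟩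
  rintro y ⟨hy1, hy2⟩
  have hEy : EngF n φ y ≤ B := hEngB y ⟨hy1, hy2⟩
  have hGlow : -Cg ≤ (n : ℝ) * (φ y) ^ 3 / 3 - (φ y) ^ 2 / 2 :=
    hCgdef ▸ lower_G hn3 hm (hlow y ⟨hy1, hy2⟩)
  have hsq : 0 ≤ (deriv φ y) ^ 2 := sq_nonneg _
  have hBB : 0 ≤ |B| := abs_nonneg B
  unfold EngF at hEy
  constructor
  · have hup : φ y ≤ 2 * |B| + 2 := coercive_G (B := B) hn3 (by linarith)
    have hlo : m ≤ φ y := hlow y ⟨hy1, hy2⟩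
    rw [abs_le]
    exact ⟨by linarith, by linarith⟩
  · have hD2b : (deriv φ y) ^ 2 ≤ 2 * (B + Cg) := by linarith
    have := abs_le_of_sq_le (by linarith) hD2b
    linarith


set_option maxHeartbeats 1000000 in
lemma extend_sol (hn3 : 3 ≤ n) (hy : 0 < ystar) (hsol : IsPhiSolOn n α ystar φ)
    {c ρ : ℝ} (hc : 0 < c) (hcy : c < ystar) (hρ : 0 < ρ)
    (hbd : ∀ y ∈ Ico c ystar, |φ y| ≤ ρ ∧ |deriv φ y| ≤ ρ) :
    ∃ b : ℝ, ystar < b ∧ ∃ ψ : ℝ → ℝ, Set.EqOn ψ φ (Ico 0 ystar) ∧ IsPhiSolOn n α b ψ := by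
  obtain ⟨hφ0, hD0, hdiff, hcont, hODE⟩ := hsol
  -- the first-order system along φ
  set g : ℝ → ℝ × ℝ := fun y => (φ y, deriv φ y) with hgdef
  have hgderiv : ∀ y, 0 < y → y < ystar → HasDerivAt g (Fv n y (g y)) y := by
    intro y h1 h2
    have hφd : HasDerivAt φ (deriv φ y) y := (hdiff y h1.le h2).1.hasDerivAt
    have hDd : HasDerivAt (deriv φ) (deriv (deriv φ) y) y := (hdiff y h1.le h2).2.hasDerivAt
    have h2' : Fv n y (g y) = (deriv φ y, deriv (deriv φ) y) := by
      have e := hODE y h1 h2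
      unfold Fv Aco
      rw [hgdef]
      simp only
      refine Prod.ext rfl ?_
      simp only
      linarith
    rw [h2']
    exact hφd.prodMk hDd
  -- constants
  obtain ⟨T, hTdef⟩ : ∃ x : ℝ, x = ystar + 1 := ⟨_, rfl⟩
  have hT0 : 0 ≤ T := by rw [hTdef]; linarith
  obtain ⟨ρ1, hρ1def⟩ : ∃ x : ℝ, x = ρ + 1 := ⟨_, rfl⟩
  have hρ10 : 0 ≤ ρ1 := by rw [hρ1def]; linarith
  obtain ⟨Cb, hCbdef⟩ : ∃ x : ℝ, x = (((n : ℝ) + 1) / c + T / 2) * ρ1 + (n : ℝ) * ρ1 ^ 2 + T * ρ1 ^ 2 + 2 * ρ1 := ⟨_, rfl⟩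
  have hCb0 : 0 < Cb := by
    rw [hCbdef]
    have h1 : 0 < ((n : ℝ) + 1) / c := by positivity
    nlinarith [sq_nonneg ρ1, hρ10,
      mul_nonneg (Nat.cast_nonneg n : (0:ℝ) ≤ (n:ℝ)) (sq_nonneg ρ1), mul_nonneg hT0 (sq_nonneg ρ1),
      mul_nonneg (le_of_lt h1) hρ10, mul_nonneg hT0 hρ10]
  set L : NNReal := Real.toNNReal (((n : ℝ) + 1) / c + T / 2 + 2 * (n : ℝ) * ρ1 + 2 * T * ρ1 + 1)
    with hLdef
  -- the small time step
  obtain ⟨δ, hδdef⟩ : ∃ x : ℝ, x = min (1 / (Cb + 1)) (min 1 (ystar - c)) := ⟨_, rfl⟩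
  have hδ0 : 0 < δ := by
    rw [hδdef]
    apply lt_min (by positivity) (lt_min one_pos (by linarith))
  have hδ1 : δ ≤ 1 := by rw [hδdef]; exact le_trans (min_le_right _ _) (min_le_left _ _)
  have hδyc : δ ≤ ystar - c := by
    rw [hδdef]; exact le_trans (min_le_right _ _) (min_le_right _ _)
  have hδCb : Cb * δ ≤ 1 := by
    have h1 : δ ≤ 1 / (Cb + 1) := by rw [hδdef]; exact min_le_left _ _
    have h2 : Cb * δ ≤ Cb * (1 / (Cb + 1)) := mul_le_mul_of_nonneg_left h1 hCb0.le
    have h3 : Cb * (1 / (Cb + 1)) ≤ 1 := by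
      rw [mul_one_div, div_le_one (by linarith)]
      linarith
    linarith
  obtain ⟨t1, ht1def⟩ : ∃ x : ℝ, x = ystar - δ / 2 := ⟨_, rfl⟩
  obtain ⟨tM, htMdef⟩ : ∃ x : ℝ, x = ystar + δ / 2 := ⟨_, rfl⟩
  have hct1 : c < t1 := by rw [ht1def]; linarith
  have ht1y : t1 < ystar := by rw [ht1def]; linarith
  have hytM : ystar < tM := by rw [htMdef]; linarith
  have htMT : tM ≤ T := by rw [htMdef, hTdef]; linarith
  have ht10 : 0 < t1 := lt_trans hc hct1
  obtain ⟨x₀, hx₀def⟩ : ∃ x : ℝ × ℝ, x = g t1 := ⟨_, rfl⟩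
  have hx₀ : ‖x₀‖ ≤ ρ := by
    obtain ⟨h1, h2⟩ := hbd t1 ⟨hct1.le, ht1y⟩
    rw [hx₀def, hgdef, Prod.norm_def]
    simp only [Real.norm_eq_abs]
    exact max_le h1 h2
  have hsub : Metric.closedBall x₀ 1 ⊆ Metric.closedBall (0 : ℝ × ℝ) ρ1 := by
    intro z hz
    rw [mem_closedBall_zero_iff]
    rw [Metric.mem_closedBall] at hz
    calc ‖z‖ = ‖z - x₀ + x₀‖ := by ring_nf
      _ ≤ ‖z - x₀‖ + ‖x₀‖ := norm_add_le _ _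
      _ ≤ 1 + ρ := add_le_add (by rwa [← dist_eq_norm]) hx₀
      _ = ρ1 := by rw [hρ1def]; ring
  -- Picard–Lindelöf data
  have ht1m : t1 ∈ Icc t1 tM := ⟨le_refl t1, by linarith⟩
  have hpl : IsPicardLindelof (Fv n) (⟨t1, ht1m⟩ : Icc t1 tM) x₀ 1 0 (Real.toNNReal Cb) L := by
    refine ⟨?_, ?_, ?_, ?_⟩
    · intro t ht
      rw [hLdef]
      exact (Fv_lipschitz hc hρ10 hT0 ⟨le_trans hct1.le ht.1, le_trans ht.2 htMT⟩).mono
        (fun z hz => hsub (by simpa using hz))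
    · intro x hx
      have hx' : x ∈ Metric.closedBall (0 : ℝ × ℝ) ρ1 := hsub (by simpa using hx)
      apply ContinuousOn.prodMk
      · exact continuousOn_const
      · have hAco : ContinuousOn (fun t => Aco n t) (Icc t1 tM) := by
          unfold Aco
          apply ContinuousOn.sub
          · exact ContinuousOn.div continuousOn_const continuousOn_id
              (fun t ht => ne_of_gt (lt_of_lt_of_le ht10 ht.1))
          · exact continuousOn_id.div_const 2
        exact (((hAco.neg.mul continuousOn_const).sub continuousOn_const).sub
          ((continuousOn_id.mul continuousOn_const).mul continuousOn_const)).add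
          continuousOn_const
    · intro t ht x hx
      rw [Real.coe_toNNReal _ hCb0.le, hCbdef]
      exact Fv_norm_le hc hρ10 hT0 ⟨le_trans hct1.le ht.1, le_trans ht.2 htMT⟩
        (hsub (by simpa using hx))
    · have : max (tM - t1) (t1 - t1) = δ := by
        rw [htMdef, ht1def]
        rw [max_eq_left (by linarith)]
        ring
      rw [Real.coe_toNNReal _ hCb0.le]
      show Cb * max (tM - t1) (t1 - t1) ≤ ((1 : NNReal) : ℝ) - ((0 : NNReal) : ℝ)
      rw [this, NNReal.coe_one, NNReal.coe_zero, sub_zero]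
      exact hδCb
  obtain ⟨f, hf0, hfprop⟩ := pl_exists_mem ht1m x₀ hpl
  have hfmem : ∀ t ∈ Icc t1 tM, f t ∈ Metric.closedBall x₀ 1 := fun t ht => by simpa using (hfprop t ht).1
  have hfd : ∀ t ∈ Icc t1 tM, HasDerivWithinAt f (Fv n t (f t)) (Icc t1 tM) t :=
    fun t ht => (hfprop t ht).2
  have hfcont : ContinuousOn f (Icc t1 tM) := fun t ht => (hfd t ht).continuousWithinAt
  -- uniqueness: g = f on [t1, ystar)
  set s : ℝ → Set (ℝ × ℝ) := fun t =>
    if t ∈ Icc c T then Metric.closedBall (0 : ℝ × ℝ) ρ1 else ∅ with hsdef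
  have hv : ∀ t, LipschitzOnWith L (Fv n t) (s t) := by
    intro t
    simp only [hsdef]
    by_cases h : t ∈ Icc c T
    · rw [if_pos h, hLdef]
      exact Fv_lipschitz hc hρ10 hT0 h
    · rw [if_neg h]
      exact lipschitzOnWith_empty _ _
  have huniq : ∀ t ∈ Ico t1 ystar, g t = f t := by
    rintro t ⟨htt1, htys⟩
    have hsub2 : Icc t1 t ⊆ Icc t1 tM := Icc_subset_Icc (le_refl _) (by linarith)
    have happ := ODE_solution_unique_of_mem_Icc_right (fun t _ => hv t)
      (f := g) (g := f) (a := t1) (b := t)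
      (fun r hr => by
        have h1 : (0:ℝ) ≤ r := le_trans ht10.le hr.1
        have h2 : r < ystar := lt_of_le_of_lt hr.2 htys
        exact (((hdiff r h1 h2).1.continuousAt.prodMk
          (hdiff r h1 h2).2.continuousAt).continuousWithinAt))
      (fun r hr => by
        have h1 : 0 < r := lt_of_lt_of_le ht10 hr.1
        have h2 : r < ystar := lt_trans hr.2 htys
        exact (hgderiv r h1 h2).hasDerivWithinAt)
      (fun r hr => by
        have h1 : r ∈ Icc c T := ⟨le_trans hct1.le hr.1,
          by linarith [hr.2.le, htys.le, hTdef]⟩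
        simp only [hsdef]
        rw [if_pos h1]
        obtain ⟨hb1, hb2⟩ := hbd r ⟨le_trans hct1.le hr.1, lt_trans hr.2 htys⟩
        rw [mem_closedBall_zero_iff, hgdef, Prod.norm_def]
        simp only [Real.norm_eq_abs]
        rw [hρ1def]
        exact max_le (by linarith) (by linarith)
      )
      (hfcont.mono hsub2)
      (fun r hr => by
        have hrIcc : r ∈ Icc t1 tM := ⟨hr.1, by linarith [hr.2.le]⟩
        have hrIco : r ∈ Ico t1 tM := ⟨hr.1, by
          have : r < ystar := lt_trans hr.2 htys
          linarith⟩
        exact (hfd r hrIcc).mono_of_mem_nhdsWithin (Icc_mem_nhdsGE_of_mem hrIco))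
      (fun r hr => by
        have h1 : r ∈ Icc c T := ⟨le_trans hct1.le hr.1,
          by linarith [hr.2.le, htys.le]⟩
        simp only [hsdef]
        rw [if_pos h1]
        exact hsub (hfmem r ⟨hr.1, by linarith [hr.2.le]⟩))
      (by rw [hf0]; exact hx₀def.symm)
    exact happ ⟨htt1, le_refl t⟩
  -- the glued function
  set ψ : ℝ → ℝ := fun z => if z < ystar then φ z else (f z).1 with hψdef
  have hψφ : ∀ z, z < ystar → ψ z = φ z := fun z hz => by rw [hψdef]; exact if_pos hz
  have hψf : ∀ z ∈ Ioo t1 tM, ψ z = (f z).1 := by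
    rintro z ⟨hz1, hz2⟩
    by_cases h : z < ystar
    · rw [hψφ z h, ← huniq z ⟨hz1.le, h⟩, hgdef]
    · rw [hψdef]; exact if_neg h
  -- derivatives of ψ on (t1, tM)
  have hfd' : ∀ z ∈ Ioo t1 tM, HasDerivAt f (Fv n z (f z)) z := fun z hz =>
    (hfd z (Ioo_subset_Icc_self hz)).hasDerivAt (Icc_mem_nhds hz.1 hz.2)
  have hψd : ∀ z ∈ Ioo t1 tM, HasDerivAt ψ ((f z).2) z := by
    intro z hz
    have h1 : HasDerivAt (fun w => (f w).1) ((Fv n z (f z)).1) z := hasDerivAt_fst (hfd' z hz)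
    have h2 : (Fv n z (f z)).1 = (f z).2 := rfl
    rw [h2] at h1
    exact h1.congr_of_eventuallyEq
      (eventuallyEq_of_mem (isOpen_Ioo.mem_nhds hz) hψf)
  have hψd_eq : ∀ z ∈ Ioo t1 tM, deriv ψ z = (f z).2 := fun z hz => (hψd z hz).deriv
  have hψdd : ∀ z ∈ Ioo t1 tM, HasDerivAt (deriv ψ) ((Fv n z (f z)).2) z := by
    intro z hz
    have h1 : HasDerivAt (fun w => (f w).2) ((Fv n z (f z)).2) z := hasDerivAt_snd (hfd' z hz)
    exact h1.congr_of_eventuallyEq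
      (eventuallyEq_of_mem (isOpen_Ioo.mem_nhds hz) hψd_eq)
  have hψdd_eq : ∀ z ∈ Ioo t1 tM, deriv (deriv ψ) z = (Fv n z (f z)).2 :=
    fun z hz => (hψdd z hz).deriv
  -- derivatives of ψ below ystar
  have hψev : ∀ z, z < ystar → ψ =ᶠ[𝓝 z] φ := fun z hz =>
    eventuallyEq_of_mem (isOpen_Iio.mem_nhds hz) (fun w hw => hψφ w hw)
  have hψdφ : ∀ z, z < ystar → deriv ψ z = deriv φ z := fun z hz => (hψev z hz).deriv_eq
  have hψdev : ∀ z, z < ystar → deriv ψ =ᶠ[𝓝 z] deriv φ := fun z hz =>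
    eventuallyEq_of_mem (isOpen_Iio.mem_nhds hz) (fun w hw => hψdφ w hw)
  have hψddφ : ∀ z, z < ystar → deriv (deriv ψ) z = deriv (deriv φ) z :=
    fun z hz => (hψdev z hz).deriv_eq
  -- the new interval
  obtain ⟨b, hbdef⟩ : ∃ x : ℝ, x = ystar + δ / 4 := ⟨_, rfl⟩
  have hbys : ystar < b := by rw [hbdef]; linarith
  have hbtM : b < tM := by rw [hbdef, htMdef]; linarith
  refine ⟨b, hbys, ψ, fun z hz => hψφ z hz.2, ?_, ?_, ?_, ?_, ?_⟩
  · rw [hψφ 0 hy]; exact hφ0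
  · rw [hψdφ 0 hy]; exact hD0
  · intro z hz0 hzb
    by_cases h : z < ystar
    · constructor
      · exact (hψev z h).differentiableAt_iff.mpr (hdiff z hz0 h).1
      · exact (hψdev z h).differentiableAt_iff.mpr (hdiff z hz0 h).2
    · push_neg at h
      have hzIoo : z ∈ Ioo t1 tM := ⟨lt_of_lt_of_le ht1y h, lt_trans hzb hbtM⟩
      exact ⟨(hψd z hzIoo).differentiableAt, (hψdd z hzIoo).differentiableAt⟩
  · intro z hz
    rcases lt_or_ge z ystar with h | h
    · have hc0 : ContinuousWithinAt (deriv (deriv φ)) (Ico 0 ystar) z := hcont z ⟨hz.1, h⟩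
      have hc1 : ContinuousWithinAt (deriv (deriv ψ)) (Ico 0 ystar) z :=
        hc0.congr (fun w hw => hψddφ w hw.2) (hψddφ z h)
      have hseteq : Ico (0:ℝ) b ∩ Iio ystar = Ico 0 ystar := by
        ext w
        constructor
        · rintro ⟨⟨h1, _⟩, h3⟩; exact ⟨h1, h3⟩
        · rintro ⟨h1, h3⟩; exact ⟨⟨h1, lt_trans h3 hbys⟩, h3⟩
      rw [← hseteq] at hc1
      exact (continuousWithinAt_inter (Iio_mem_nhds h)).mp hc1
    · have hzIoo : z ∈ Ioo t1 tM := ⟨lt_of_lt_of_le ht1y h, lt_trans hz.2 hbtM⟩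
      have hz0 : 0 < z := lt_of_lt_of_le hy h
      have hfc : ContinuousAt f z := (hfd' z hzIoo).differentiableAt.continuousAt
      have hf1c : ContinuousAt (fun w => (f w).1) z := continuous_fst.continuousAt.comp hfc
      have hf2c : ContinuousAt (fun w => (f w).2) z := continuous_snd.continuousAt.comp hfc
      have hAc : ContinuousAt (fun w => Aco n w) z := by
        unfold Aco
        exact (continuousAt_const.div continuousAt_id (ne_of_gt hz0)).sub
          (continuousAt_id.div_const 2)
      have hFc : ContinuousAt (fun w => (Fv n w (f w)).2) z := by
        simp only [Fv]
        exact ((((hAc.neg.mul hf2c).sub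
          (continuousAt_const.mul (hf1c.pow 2))).sub
          ((continuousAt_id.mul hf1c).mul hf2c)).add hf1c)
      have hev : deriv (deriv ψ) =ᶠ[𝓝 z] (fun w => (Fv n w (f w)).2) :=
        eventuallyEq_of_mem (isOpen_Ioo.mem_nhds hzIoo) (fun w hw => hψdd_eq w hw)
      exact (hFc.congr_of_eventuallyEq hev).continuousWithinAt
  · intro z hz0 hzb
    rcases lt_or_ge z ystar with h | h
    · rw [hψddφ z h, hψdφ z h, hψφ z h]
      exact hODE z hz0 h
    · have hzIoo : z ∈ Ioo t1 tM := ⟨lt_of_lt_of_le ht1y h, lt_trans hzb hbtM⟩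
      rw [hψdd_eq z hzIoo, hψd_eq z hzIoo, hψf z hzIoo]
      unfold Fv Aco
      simp only
      ring

/-- Lemma 7.2: blow-up of the profile at a finite maximal existence
time. Let `n ≥ 3`, `α > 0`, and let `φ` be the maximal solution of the initial value
problem on `[0, y*)`. If `y* < ∞`, then `φ(y) → +∞` or `φ(y) → -∞` as `y → y*⁻`. -/
theorem statement17
    (n : ℕ) (hn3 : 3 ≤ n)
    (α : ℝ) (hα : 0 < α)
    (φ : ℝ → ℝ) (ystar : ℝ) (hy : 0 < ystar)
    (hsol : IsPhiSolOn n α ystar φ)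
    (hmax : ∀ b : ℝ, ystar < b → ∀ ψ : ℝ → ℝ,
      Set.EqOn ψ φ (Ico 0 ystar) → ¬ IsPhiSolOn n α b ψ) :
    Tendsto φ (𝓝[<] ystar) atTop ∨ Tendsto φ (𝓝[<] ystar) atBot := by
  obtain ⟨hφ0, hD0, hdiff, hcont, hODE⟩ := id hsol
  have hcontra : ∀ c m : ℝ, 0 < c → c < ystar → m ≤ 0 →
      (∀ y ∈ Ico c ystar, m ≤ φ y) → False := by
    intro c m hc hcy hm hlow
    obtain ⟨ρ, hρ, hbd⟩ := energy_bound hn3 hy hsol hc hcy hm hlow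
    obtain ⟨b, hb, ψ, hEq, hψ⟩ := extend_sol hn3 hy hsol hc hcy hρ hbd
    exact hmax b hb ψ hEq hψ
  by_cases hneg : ∃ y₀ : ℝ, (0 < y₀ ∧ y₀ < ystar) ∧ φ y₀ < 0 ∧ deriv φ y₀ < 0
  · obtain ⟨y₀, ⟨hy₀0, hy₀s⟩, hφy₀, hDy₀⟩ := hneg
    have hD := neg_invariant hn3 hy hsol hy₀0 hy₀s hφy₀ hDy₀
    have hmono : ∀ t u : ℝ, y₀ ≤ t → t < u → u < ystar → φ u < φ t := by
      intro t u h1 h2 h3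
      have hanti : StrictAntiOn φ (Icc t u) := by
        apply strictAntiOn_of_deriv_neg (convex_Icc _ _)
        · intro w hw
          have hw1 : 0 ≤ w := le_trans (le_trans hy₀0.le h1) hw.1
          have hw2 : w < ystar := lt_of_le_of_lt hw.2 h3
          exact (hdiff w hw1 hw2).1.continuousAt.continuousWithinAt
        · intro w hw
          rw [interior_Icc] at hw
          exact hD w ⟨le_trans h1 hw.1.le, lt_trans hw.2 h3⟩
      exact hanti (left_mem_Icc.mpr (le_of_lt h2)) (right_mem_Icc.mpr (le_of_lt h2)) h2
    by_cases hbb : ∃ m : ℝ, m ≤ 0 ∧ ∀ y ∈ Ico y₀ ystar, m ≤ φ y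
    · obtain ⟨m, hm, hlow⟩ := hbb
      exact (hcontra y₀ m hy₀0 hy₀s hm hlow).elim
    · right
      rw [tendsto_atBot]
      intro M
      push_neg at hbb
      obtain ⟨y₁, hy₁, hφy₁⟩ := hbb (min M (-1)) (le_trans (min_le_right _ _) (by norm_num))
      have hMle : min M (-1) ≤ M := min_le_left _ _
      filter_upwards [Ioo_mem_nhdsLT_of_mem (⟨hy₁.2, le_refl ystar⟩ : ystar ∈ Ioc y₁ ystar)]
        with z hz
      have := hmono y₁ z hy₁.1 hz.1 hz.2
      linarith
  · push_neg at hneg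
    have hpos : ∀ y ∈ Ico (ystar / 2) ystar, (0:ℝ) ≤ φ y := by
      rintro y ⟨hy1, hy2⟩
      by_contra hϕ
      push_neg at hϕ
      have hy0 : 0 < y := lt_of_lt_of_le (half_pos hy) hy1
      set S : Set ℝ := {w ∈ Icc 0 y | 0 ≤ φ w} with hSdef
      have hφcont : ContinuousOn φ (Icc 0 y) := fun w hw =>
        (hdiff w hw.1 (lt_of_le_of_lt hw.2 hy2)).1.continuousAt.continuousWithinAt
      have hScl : IsClosed S := by
        have := hφcont.preimage_isClosed_of_isClosed isClosed_Icc (isClosed_Ici (a := (0:ℝ)))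
        exact this
      have hSne : S.Nonempty := ⟨0, ⟨le_refl 0, hy0.le⟩, by rw [hφ0]; exact hα.le⟩
      have hSbdd : BddAbove S := ⟨y, fun w hw => hw.1.2⟩
      set a := sSup S with hadef
      have haS : a ∈ S := hScl.csSup_mem hSne hSbdd
      have hay : a < y := by
        rcases lt_or_eq_of_le haS.1.2 with h | h
        · exact h
        · rw [h] at haS; exact absurd haS.2 (not_le.mpr hϕ)
      have hnegint : ∀ w ∈ Ioc a y, φ w < 0 := by
        rintro w ⟨hw1, hw2⟩
        by_contra hww
        push_neg at hww
        exact absurd (le_csSup hSbdd ⟨⟨le_trans haS.1.1 hw1.le, hw2⟩, hww⟩) (not_le.mpr hw1)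
      obtain ⟨ξ, hξIoo, hξd⟩ := exists_deriv_eq_slope φ hay
        (hφcont.mono (Icc_subset_Icc haS.1.1 (le_refl y)))
        (fun w hw => (hdiff w (le_trans haS.1.1 hw.1.le)
          (lt_trans hw.2 hy2)).1.differentiableWithinAt)
      have hξφ : φ ξ < 0 := hnegint ξ ⟨hξIoo.1, hξIoo.2.le⟩
      have hξd0 : deriv φ ξ < 0 := by
        rw [hξd]
        apply div_neg_of_neg_of_pos
        · have := haS.2; linarith
        · linarith [hξIoo.1, hξIoo.2]
      have hξ0 : 0 < ξ := lt_of_le_of_lt haS.1.1 hξIoo.1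
      have hξs : ξ < ystar := lt_trans hξIoo.2 hy2
      exact absurd (hneg ξ ⟨hξ0, hξs⟩ hξφ) (not_le.mpr hξd0)
    exact (hcontra (ystar / 2) 0 (half_pos hy) (by linarith) (le_refl 0) hpos).elim
end
end

section
/- Let n ≥ 3 and let W₁ be the maximal solution of the initial value problem W'' + ((n+1)/r) W' + n W² + r W W' = 0, W(0) = 1, W'(0) = 0, defined on its maximal existence interval [0, r̄). Then r̄ = ∞ (the solution is global), W₁(r) > 0 for all r ≥ 0, and W₁'(r) ≤ 0 for all r ≥ 0. (Key steps: Z := nW₁ + rW₁' satisfies Z' = −rW₁Z with Z(0) = n > 0, hence Z > 0 and (rⁿW₁)' ≥ 0 so W₁ > 0; and (r^{n+1}W₁')' = −r^{n+1}W₁Z ≤ 0 gives W₁' ≤ 0, so W₁ is bounded and the solution extends globally.) -/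
open Real Set Filter
open scoped ENNReal Topology

noncomputable section

/-- `W` is a `C²` solution on `[0,b)` (with `b ∈ (0,∞]`) of the steady-state equation
`W'' + ((n+1)/r)W' + nW² + rWW' = 0` with `W(0) = 1`, `W'(0) = 0`. -/
def IsW1SolOn (n : ℕ) (b : ℝ≥0∞) (W : ℝ → ℝ) : Prop :=
  W 0 = 1 ∧ deriv W 0 = 0 ∧
    (∀ r : ℝ, 0 ≤ r → ENNReal.ofReal r < b →
      DifferentiableAt ℝ W r ∧ DifferentiableAt ℝ (deriv W) r) ∧
    ∀ r : ℝ, 0 < r → ENNReal.ofReal r < b →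
      deriv (deriv W) r + (((n : ℝ) + 1) / r) * deriv W r + (n : ℝ) * W r ^ 2
        + r * W r * deriv W r = 0

namespace S18

open MeasureTheory intervalIntegral

variable {n : ℕ} {W : ℝ → ℝ} {rbar : ℝ≥0∞}

lemma mem_of_le {r y : ℝ} (hr : ENNReal.ofReal r < rbar) (hyr : y ≤ r) :
    ENNReal.ofReal y < rbar :=
  lt_of_le_of_lt (ENNReal.ofReal_le_ofReal hyr) hr

lemma exists_gt {r : ℝ} (h0 : 0 ≤ r) (hr : ENNReal.ofReal r < rbar) :
    ∃ c, r < c ∧ ENNReal.ofReal c < rbar := by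
  obtain ⟨z, hz1, hz2⟩ := exists_between hr
  refine ⟨z.toReal, ?_, ?_⟩
  · exact (ENNReal.ofReal_lt_iff_lt_toReal h0 hz2.ne_top).mp hz1
  · rwa [ENNReal.ofReal_toReal hz2.ne_top]

section sol
variable (hsol : IsW1SolOn n rbar W)
include hsol

lemma hdW {r : ℝ} (h0 : 0 ≤ r) (hr : ENNReal.ofReal r < rbar) :
    HasDerivAt W (deriv W r) r := ((hsol.2.2.1 r h0 hr).1).hasDerivAt

lemma hdW' {r : ℝ} (h0 : 0 ≤ r) (hr : ENNReal.ofReal r < rbar) :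
    HasDerivAt (deriv W) (deriv (deriv W) r) r := ((hsol.2.2.1 r h0 hr).2).hasDerivAt

lemma ode {r : ℝ} (h0 : 0 < r) (hr : ENNReal.ofReal r < rbar) :
    deriv (deriv W) r = -(((n : ℝ) + 1) / r) * deriv W r - (n : ℝ) * W r ^ 2
      - r * W r * deriv W r := by
  have := hsol.2.2.2 r h0 hr; linarith

lemma contW {r : ℝ} (h0 : 0 ≤ r) (hr : ENNReal.ofReal r < rbar) :
    ContinuousAt W r := ((hsol.2.2.1 r h0 hr).1).continuousAt

lemma contW' {r : ℝ} (h0 : 0 ≤ r) (hr : ENNReal.ofReal r < rbar) :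
    ContinuousAt (deriv W) r := ((hsol.2.2.1 r h0 hr).2).continuousAt

/-- Z := nW + rW' is positive on [0, rbar). -/
lemma zpos (hn : 1 ≤ n) {r : ℝ} (h0 : 0 ≤ r) (hr : ENNReal.ofReal r < rbar) :
    0 < (n : ℝ) * W r + r * deriv W r := by
  have hn' : (1:ℝ) ≤ (n:ℝ) := by exact_mod_cast hn
  rcases eq_or_lt_of_le h0 with h | hrpos
  · rw [← h]; simp [hsol.1, hsol.2.1]; linarith
  obtain ⟨c, hrc, hc⟩ := exists_gt h0 hr
  have hc0 : (0:ℝ) < c := lt_of_le_of_lt h0 hrc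
  have hmem : ∀ y ∈ Ico (0:ℝ) c, ENNReal.ofReal y < rbar :=
    fun y hy => mem_of_le hc hy.2.le
  have hcont : ∀ y ∈ Ico (0:ℝ) c, ContinuousAt (fun s => s * W s) y :=
    fun y hy => continuousAt_id.mul (contW hsol hy.1 (hmem y hy))
  set Z : ℝ → ℝ := fun t => (n : ℝ) * W t + t * deriv W t with hZdef
  set G : ℝ → ℝ := fun t => ∫ s in (0:ℝ)..t, s * W s with hGdef
  have hZd : ∀ x ∈ Ico (0:ℝ) c,
      HasDerivAt Z ((n : ℝ) * deriv W x + (deriv W x + x * deriv (deriv W) x)) x := by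
    intro x hx
    have h1 := hdW hsol hx.1 (hmem x hx)
    have h2 := hdW' hsol hx.1 (hmem x hx)
    have := (h1.const_mul ((n:ℝ))).add ((hasDerivAt_id x).mul h2)
    simp only [Z]
    simp at this
    exact this
  -- FTC for G
  have hGd : ∀ x ∈ Ico (0:ℝ) c, HasDerivWithinAt G (x * W x) (Ici x) x := by
    intro x hx
    have hInt : IntervalIntegrable (fun s => s * W s) volume 0 x := by
      apply ContinuousOn.intervalIntegrable
      intro y hy
      rw [uIcc_of_le hx.1] at hy
      exact (hcont y ⟨hy.1, lt_of_le_of_lt hy.2 hx.2⟩).continuousWithinAt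
    have hmeas : StronglyMeasurableAtFilter (fun s => s * W s) (𝓝[>] x) volume := by
      refine ⟨Ioo x c, Ioo_mem_nhdsGT_of_mem ⟨le_rfl, hx.2⟩,
        ContinuousOn.aestronglyMeasurable ?_ measurableSet_Ioo⟩
      intro y hy
      exact (hcont y ⟨hx.1.trans hy.1.le, hy.2⟩).continuousWithinAt
    exact intervalIntegral.integral_hasDerivWithinAt_right hInt hmeas
      ((hcont x hx).continuousWithinAt)
  have hrc' : Icc (0:ℝ) r ⊆ Ico (0:ℝ) c := fun y hy => ⟨hy.1, lt_of_le_of_lt hy.2 hrc⟩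
  -- the integrating-factor function is constant on [0, r]
  have key : ∀ x ∈ Icc (0:ℝ) r, Z x * Real.exp (G x) = Z 0 * Real.exp (G 0) := by
    apply constant_of_has_deriv_right_zero
    · -- continuity
      intro x hx
      have hx' := hrc' hx
      have hZc : ContinuousWithinAt Z (Icc 0 r) x := (hZd x hx').continuousAt.continuousWithinAt
      have hGc : ContinuousWithinAt G (Icc 0 r) x := by
        rcases eq_or_lt_of_le hx'.1 with h | h
        · exact (hGd x hx').continuousWithinAt.mono
            (by rw [← h]; exact fun y hy => hy.1)
        · -- interior point: two-sided FTC
          have hInt : IntervalIntegrable (fun s => s * W s) volume 0 x := by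
            apply ContinuousOn.intervalIntegrable
            intro y hy
            rw [uIcc_of_le hx'.1] at hy
            exact (hcont y ⟨hy.1, lt_of_le_of_lt hy.2 hx'.2⟩).continuousWithinAt
          have hmeas : StronglyMeasurableAtFilter (fun s => s * W s) (𝓝 x) volume := by
            refine ⟨Ioo 0 c, Ioo_mem_nhds h hx'.2,
              ContinuousOn.aestronglyMeasurable ?_ measurableSet_Ioo⟩
            intro y hy
            exact (hcont y ⟨hy.1.le, hy.2⟩).continuousWithinAt
          exact (intervalIntegral.integral_hasDerivAt_right hInt hmeas
            (hcont x hx')).continuousAt.continuousWithinAt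
      exact hZc.mul (Real.continuous_exp.continuousAt.comp_continuousWithinAt hGc)
    · intro x hx
      have hx' : x ∈ Ico (0:ℝ) c := ⟨hx.1, lt_of_lt_of_le hx.2 (le_of_lt hrc)⟩
      have hG := hGd x hx'
      have hZ := (hZd x hx').hasDerivWithinAt (s := Ici x)
      have hexp : HasDerivWithinAt (fun t => Real.exp (G t))
          (Real.exp (G x) * (x * W x)) (Ici x) x :=
        (Real.hasDerivAt_exp (G x)).comp_hasDerivWithinAt x hG
      have hprod := hZ.mul hexp
      have hval : ((n : ℝ) * deriv W x + (deriv W x + x * deriv (deriv W) x))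
          * Real.exp (G x) + Z x * (Real.exp (G x) * (x * W x)) = 0 := by
        rcases eq_or_lt_of_le hx'.1 with h | hxpos
        · rw [← h]
          simp [Z, hsol.2.1]
        · have hode := ode hsol hxpos (hmem x hx')
          have hx0 : x ≠ 0 := ne_of_gt hxpos
          rw [hode]
          simp only [Z]
          field_simp
          ring
      rw [hval] at hprod
      exact hprod
  have hkr := key r ⟨h0, le_rfl⟩
  have hZ0 : Z 0 = (n : ℝ) := by simp [Z, hsol.1, hsol.2.1]
  have hG0 : G 0 = 0 := by simp [G]
  rw [hZ0, hG0, Real.exp_zero, mul_one] at hkr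
  have hepos := Real.exp_pos (G r)
  have : Z r = (n : ℝ) / Real.exp (G r) := by rw [eq_div_iff hepos.ne']; exact hkr
  show 0 < Z r
  rw [this]
  positivity

/-- W is positive on [0, rbar). -/
lemma wpos (hn : 3 ≤ n) {r : ℝ} (h0 : 0 ≤ r) (hr : ENNReal.ofReal r < rbar) :
    0 < W r := by
  rcases eq_or_lt_of_le h0 with h | hrpos
  · rw [← h, hsol.1]; norm_num
  obtain ⟨m, rfl⟩ : ∃ m, n = m + 3 := ⟨n - 3, by omega⟩
  set P : ℝ → ℝ := fun t => t ^ (m + 3) * W t with hPdef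
  have hmem : ∀ y ∈ Icc (0:ℝ) r, ENNReal.ofReal y < rbar := fun y hy => mem_of_le hr hy.2
  have hP : StrictMonoOn P (Icc 0 r) := by
    apply strictMonoOn_of_deriv_pos (convex_Icc 0 r)
    · intro x hx
      exact ((continuousAt_pow x (m+3)).mul (contW hsol hx.1 (hmem x hx))).continuousWithinAt
    · intro x hx
      rw [interior_Icc] at hx
      have hxm := hmem x ⟨hx.1.le, hx.2.le⟩
      have hd : HasDerivAt P ((↑(m + 3) : ℝ) * x ^ (m + 2) * W x + x ^ (m + 3) * deriv W x)
          x := by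
        have := (hasDerivAt_pow (m+3) x).mul (hdW hsol hx.1.le hxm)
        simp [P] at this ⊢
        exact this
      rw [hd.deriv]
      have hz := zpos hsol (by omega) hx.1.le hxm
      have hxp := pow_pos hx.1 (m + 2)
      have hexpand : (↑(m + 3) : ℝ) * x ^ (m + 2) * W x + x ^ (m + 3) * deriv W x
          = x ^ (m + 2) * ((↑(m + 3) : ℝ) * W x + x * deriv W x) := by ring
      rw [hexpand]
      push_cast at hz ⊢
      nlinarith
  have h01 : P 0 < P r := hP ⟨le_rfl, h0⟩ ⟨h0, le_rfl⟩ hrpos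
  have : P 0 = 0 := by simp [P]
  rw [this] at h01
  have hxp := pow_pos hrpos (m + 3)
  simp only [P] at h01
  nlinarith

/-- deriv W is nonpositive on [0, rbar). -/
lemma derivW_nonpos (hn : 3 ≤ n) {r : ℝ} (h0 : 0 ≤ r) (hr : ENNReal.ofReal r < rbar) :
    deriv W r ≤ 0 := by
  rcases eq_or_lt_of_le h0 with h | hrpos
  · rw [← h, hsol.2.1]
  obtain ⟨m, rfl⟩ : ∃ m, n = m + 3 := ⟨n - 3, by omega⟩
  set Q : ℝ → ℝ := fun t => t ^ (m + 4) * deriv W t with hQdef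
  have hmem : ∀ y ∈ Icc (0:ℝ) r, ENNReal.ofReal y < rbar := fun y hy => mem_of_le hr hy.2
  have hder : ∀ x ∈ Ioo (0:ℝ) r, HasDerivAt Q
      ((↑(m + 4) : ℝ) * x ^ (m + 3) * deriv W x + x ^ (m + 4) * deriv (deriv W) x) x := by
    intro x hx
    have hxm := hmem x ⟨hx.1.le, hx.2.le⟩
    have := (hasDerivAt_pow (m+4) x).mul (hdW' hsol hx.1.le hxm)
    simp [Q] at this ⊢
    exact this
  have hQ : AntitoneOn Q (Icc 0 r) := by
    apply antitoneOn_of_deriv_nonpos (convex_Icc 0 r)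
    · intro x hx
      exact ((continuousAt_pow x (m+4)).mul (contW' hsol hx.1 (hmem x hx))).continuousWithinAt
    · rw [interior_Icc]
      intro x hx
      exact (hder x hx).differentiableAt.differentiableWithinAt
    · rw [interior_Icc]
      intro x hx
      rw [(hder x hx).deriv]
      have hxm := hmem x ⟨hx.1.le, hx.2.le⟩
      have hode := ode hsol hx.1 hxm
      have hz := zpos hsol (by omega) hx.1.le hxm
      have hw := wpos hsol (by omega) hx.1.le hxm
      have hx0 : x ≠ 0 := ne_of_gt hx.1
      have hexpand : (↑(m + 4) : ℝ) * x ^ (m + 3) * deriv W x + x ^ (m + 4) * deriv (deriv W) x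
          = -(x ^ (m + 4) * W x) * ((↑(m + 3) : ℝ) * W x + x * deriv W x) := by
        rw [hode]
        field_simp
        push_cast
        ring
      rw [hexpand]
      have hxp := pow_pos hx.1 (m + 4)
      push_cast at hz ⊢
      nlinarith [mul_pos (mul_pos hxp hw) hz]
  have h01 : Q r ≤ Q 0 := hQ ⟨le_rfl, h0⟩ ⟨h0, le_rfl⟩ h0
  have hQ0 : Q 0 = 0 := by simp [Q]
  rw [hQ0] at h01
  simp only [Q] at h01
  have hxp := pow_pos hrpos (m + 4)
  nlinarith

/-- W is antitone on [0, rbar). -/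
lemma wantitone (hn : 3 ≤ n) {s t : ℝ} (h0 : 0 ≤ s) (hst : s ≤ t)
    (ht : ENNReal.ofReal t < rbar) : W t ≤ W s := by
  have hmem : ∀ y ∈ Icc (0:ℝ) t, ENNReal.ofReal y < rbar := fun y hy => mem_of_le ht hy.2
  have hA : AntitoneOn W (Icc 0 t) := by
    apply antitoneOn_of_deriv_nonpos (convex_Icc 0 t)
    · intro x hx
      exact (contW hsol hx.1 (hmem x hx)).continuousWithinAt
    · rw [interior_Icc]
      intro x hx
      exact ((hsol.2.2.1 x hx.1.le (hmem x ⟨hx.1.le, hx.2.le⟩)).1).differentiableWithinAt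
    · rw [interior_Icc]
      intro x hx
      exact derivW_nonpos hsol hn hx.1.le (hmem x ⟨hx.1.le, hx.2.le⟩)
  exact hA ⟨h0, hst⟩ ⟨h0.trans hst, le_rfl⟩ hst

lemma wle1 (hn : 3 ≤ n) {r : ℝ} (h0 : 0 ≤ r) (hr : ENNReal.ofReal r < rbar) :
    W r ≤ 1 := by
  have := wantitone hsol hn le_rfl h0 hr
  rwa [hsol.1] at this

omit hsol in
lemma bdd_deriv (hn : 3 ≤ n) (hsol : IsW1SolOn n rbar W) {t c : ℝ} (hc0 : 0 < c) (hct : c ≤ t)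
    (ht : ENNReal.ofReal t < rbar) :
    -((n : ℝ)/c) ≤ deriv W t ∧ deriv W t ≤ 0 := by
  have ht0 : (0:ℝ) ≤ t := hc0.le.trans hct
  have hz := zpos hsol (by omega) ht0 ht
  have hw1 := wle1 hsol hn ht0 ht
  have hwp := wpos hsol hn ht0 ht
  have hd0 := derivW_nonpos hsol hn ht0 ht
  refine ⟨?_, hd0⟩
  have h1 : t * deriv W t ≥ -((n:ℝ) * W t) := by linarith
  have h2 : c * deriv W t ≥ t * deriv W t := by nlinarith
  have h3 : c * deriv W t ≥ -(n:ℝ) := by nlinarith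
  rw [neg_le, le_div_iff₀ hc0]
  linarith

omit hsol in
lemma bdd_deriv2 (hn : 3 ≤ n) (hsol : IsW1SolOn n rbar W) {t c R : ℝ} (hc0 : 0 < c)
    (hct : c ≤ t) (htR : t ≤ R) (ht : ENNReal.ofReal t < rbar) :
    |deriv (deriv W) t| ≤ ((n:ℝ)+1)/c * ((n:ℝ)/c) + (n:ℝ) + R * ((n:ℝ)/c) := by
  set D := (n:ℝ)/c with hD
  have hD0 : 0 ≤ D := by positivity
  have ht0 : (0:ℝ) < t := lt_of_lt_of_le hc0 hct
  have hd := bdd_deriv hn hsol hc0 hct ht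
  have hode := ode hsol ht0 ht
  have hwp := wpos hsol hn ht0.le ht
  have hw1 := wle1 hsol hn ht0.le ht
  have ha : ((n:ℝ)+1)/t ≤ ((n:ℝ)+1)/c := by gcongr
  have hapos : (0:ℝ) ≤ ((n:ℝ)+1)/t := by positivity
  have h1 : (((n:ℝ)+1)/t) * (-deriv W t) ≤ (((n:ℝ)+1)/c) * D :=
    mul_le_mul ha (by linarith [hd.1, hd.2]) (by linarith [hd.2]) (by positivity)
  have h2a : t * W t ≤ R := by nlinarith
  have h2b : (0:ℝ) ≤ t * W t := by positivity
  have h2 : (t * W t) * (-deriv W t) ≤ R * D :=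
    mul_le_mul h2a (by linarith [hd.1, hd.2]) (by linarith [hd.2]) (le_trans h2b h2a)
  have hsq : (0:ℝ) ≤ (n:ℝ) * W t ^ 2 := by positivity
  have hW2 : W t ^ 2 ≤ 1 := by nlinarith
  have hsq1 : (n:ℝ) * W t ^ 2 ≤ (n:ℝ) := by
    nlinarith [mul_le_mul_of_nonneg_left hW2 (by positivity : (0:ℝ) ≤ (n:ℝ))]
  rw [abs_le]
  constructor
  · rw [hode]
    nlinarith [mul_nonneg hapos (by linarith [hd.2] : (0:ℝ) ≤ -deriv W t),
      mul_nonneg h2b (by linarith [hd.2] : (0:ℝ) ≤ -deriv W t)]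
  · rw [hode]
    nlinarith [mul_nonneg (le_trans hD0 (le_of_eq rfl)) hD0,
      mul_nonneg (div_nonneg (by positivity : (0:ℝ) ≤ (n:ℝ)+1) hc0.le) hD0,
      mul_nonneg (le_trans h2b h2a) hD0]

end sol

/-- The maximal solution is global. -/
lemma global (hn : 3 ≤ n) (hrbar : 0 < rbar) (hsol : IsW1SolOn n rbar W)
    (hmax : ∀ b : ℝ≥0∞, rbar < b → ∀ ψ : ℝ → ℝ,
      Set.EqOn ψ W {r : ℝ | 0 ≤ r ∧ ENNReal.ofReal r < rbar} → ¬ IsW1SolOn n b ψ) :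
    rbar = ⊤ := by
  by_contra hne
  set ρ := rbar.toReal with hρdef
  have hρ : 0 < ρ := ENNReal.toReal_pos (ne_of_gt hrbar) hne
  have hlt : ∀ r : ℝ, 0 ≤ r → (ENNReal.ofReal r < rbar ↔ r < ρ) := fun r h0 =>
    ENNReal.ofReal_lt_iff_lt_toReal h0 hne
  set c : ℝ := ρ/2 with hcdef
  have hc0 : 0 < c := by positivity
  have hcρ : c < ρ := by rw [hcdef]; linarith
  have hmem : ∀ t : ℝ, c ≤ t → t < ρ → ENNReal.ofReal t < rbar := fun t h1 h2 =>
    (hlt t (hc0.le.trans h1)).mpr h2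
  set D : ℝ := (n:ℝ)/c with hDdef
  have hD0 : 0 ≤ D := by positivity
  set M₂ : ℝ := ((n:ℝ)+1)/c * ((n:ℝ)/c) + (n:ℝ) + ρ * ((n:ℝ)/c) with hM₂def
  have hM₂0 : 0 ≤ M₂ := by positivity
  -- Lipschitz bounds on [c, ρ)
  have hWlip : LipschitzOnWith D.toNNReal W (Ico c ρ) := by
    apply (convex_Ico c ρ).lipschitzOnWith_of_nnnorm_hasDerivWithin_le
      (f' := deriv W)
      (fun x hx => (hdW hsol (hc0.le.trans hx.1) (hmem x hx.1 hx.2)).hasDerivWithinAt)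
    intro x hx
    have hb := bdd_deriv hn hsol hc0 hx.1 (hmem x hx.1 hx.2)
    rw [← NNReal.coe_le_coe, coe_nnnorm, Real.coe_toNNReal _ hD0, Real.norm_eq_abs, abs_le]
    exact ⟨hb.1, hb.2.trans hD0⟩
  have hW'lip : LipschitzOnWith M₂.toNNReal (deriv W) (Ico c ρ) := by
    apply (convex_Ico c ρ).lipschitzOnWith_of_nnnorm_hasDerivWithin_le
      (f' := deriv (deriv W))
      (fun x hx => (hdW' hsol (hc0.le.trans hx.1) (hmem x hx.1 hx.2)).hasDerivWithinAt)
    intro x hx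
    have hb := bdd_deriv2 hn hsol hc0 hx.1 hx.2.le (hmem x hx.1 hx.2)
    rw [← NNReal.coe_le_coe, coe_nnnorm, Real.coe_toNNReal _ hM₂0, Real.norm_eq_abs]
    exact hb
  -- limits at ρ⁻
  obtain ⟨gW, hgWl, hEqW⟩ := hWlip.extend_real
  obtain ⟨gW', hgW'l, hEqW'⟩ := hW'lip.extend_real
  set A : ℝ := gW ρ with hAdef
  set L : ℝ := gW' ρ with hLdef
  have hIco : Ico c ρ ∈ 𝓝[<] ρ := Ico_mem_nhdsLT_of_mem ⟨hcρ, le_rfl⟩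
  have htendW : Tendsto W (𝓝[<] ρ) (𝓝 A) := by
    refine Tendsto.congr' (eventuallyEq_of_mem hIco (fun t ht => (hEqW ht).symm)) ?_
    exact (hgWl.continuous.tendsto ρ).mono_left nhdsWithin_le_nhds
  have htendW' : Tendsto (deriv W) (𝓝[<] ρ) (𝓝 L) := by
    refine Tendsto.congr' (eventuallyEq_of_mem hIco (fun t ht => (hEqW' ht).symm)) ?_
    exact (hgW'l.continuous.tendsto ρ).mono_left nhdsWithin_le_nhds
  have hidt : Tendsto (fun t : ℝ => t) (𝓝[<] ρ) (𝓝 ρ) := tendsto_id.mono_left nhdsWithin_le_nhds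
  set B : ℝ := -(((n:ℝ)+1)/ρ) * L - (n:ℝ) * A^2 - ρ * A * L with hBdef
  have htendW'' : Tendsto (fun t => deriv (deriv W) t) (𝓝[<] ρ) (𝓝 B) := by
    have t1 : Tendsto (fun t : ℝ => -(((n:ℝ)+1)/t) * deriv W t) (𝓝[<] ρ)
        (𝓝 (-(((n:ℝ)+1)/ρ) * L)) :=
      ((tendsto_const_nhds.div hidt hρ.ne').neg).mul htendW'
    have t2 : Tendsto (fun t : ℝ => (n:ℝ) * W t ^ 2) (𝓝[<] ρ) (𝓝 ((n:ℝ) * A^2)) :=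
      tendsto_const_nhds.mul (htendW.pow 2)
    have t3 : Tendsto (fun t : ℝ => t * W t * deriv W t) (𝓝[<] ρ) (𝓝 (ρ * A * L)) :=
      (hidt.mul htendW).mul htendW'
    refine Tendsto.congr' ?_ ((t1.sub t2).sub t3)
    filter_upwards [hIco] with t ht
    rw [ode hsol (hc0.trans_le ht.1) (hmem t ht.1 ht.2)]
  -- the vector field
  set x₀ : ℝ × ℝ × ℝ := (ρ, A, L) with hx₀def
  set F : ℝ × ℝ × ℝ → ℝ × ℝ × ℝ := fun p =>
    ((1:ℝ), p.2.2, -(((n:ℝ)+1)/p.1) * p.2.2 - (n:ℝ) * p.2.1^2 - p.1 * p.2.1 * p.2.2) with hFdef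
  have hF : ContDiffAt ℝ 1 F x₀ := by
    have c1 : ContDiffAt ℝ 1 (fun p : ℝ × ℝ × ℝ => p.1) x₀ := contDiff_fst.contDiffAt
    have c2 : ContDiffAt ℝ 1 (fun p : ℝ × ℝ × ℝ => p.2.1) x₀ :=
      (contDiff_fst.comp contDiff_snd).contDiffAt
    have c3 : ContDiffAt ℝ 1 (fun p : ℝ × ℝ × ℝ => p.2.2) x₀ :=
      (contDiff_snd.comp contDiff_snd).contDiffAt
    have hx1 : (fun p : ℝ × ℝ × ℝ => p.1) x₀ ≠ 0 := hρ.ne'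
    refine ContDiffAt.prodMk contDiffAt_const (c3.prodMk ?_)
    exact (((contDiffAt_const.div c1 hx1).neg.mul c3).sub
      (contDiffAt_const.mul (c2.pow 2))).sub ((c1.mul c2).mul c3)
  -- local solution through (ρ, A, L)
  obtain ⟨g, hg0, ε, hε, hg⟩ := hF.exists_forall_mem_closedBall_exists_eq_forall_mem_Ioo_hasDerivAt₀ ρ
  have hρmem : ρ ∈ Ioo (ρ - ε) (ρ + ε) := by constructor <;> linarith
  -- the first component of g is the identity
  have hgfst : ∀ t ∈ Ioo (ρ - ε) (ρ + ε), (g t).1 = t := by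
    have hk : ∀ t ∈ Ioo (ρ - ε) (ρ + ε), HasDerivAt (fun t => (g t).1 - t) 0 t := by
      intro t ht
      have h1 : HasDerivAt (fun t => (g t).1) 1 t := by
        have := ((ContinuousLinearMap.fst ℝ ℝ (ℝ × ℝ)).hasFDerivAt
          (x := g t)).comp_hasDerivAt t (hg t ht)
        simp [F] at this ⊢
        exact this
      have := h1.sub (hasDerivAt_id' t)
      simp at this ⊢
      exact this
    have key : ∀ s t : ℝ, s ∈ Ioo (ρ - ε) (ρ + ε) → t ∈ Ioo (ρ - ε) (ρ + ε) → s ≤ t →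
        (g t).1 - t = (g s).1 - s := by
      intro s t hs ht hst
      have hIcc : Icc s t ⊆ Ioo (ρ - ε) (ρ + ε) := fun x hx =>
        ⟨lt_of_lt_of_le hs.1 hx.1, lt_of_le_of_lt hx.2 ht.2⟩
      exact constant_of_has_deriv_right_zero
        (fun x hx => (hk x (hIcc hx)).continuousAt.continuousWithinAt)
        (fun x hx => (hk x (hIcc (Ico_subset_Icc_self hx))).hasDerivWithinAt) t ⟨hst, le_rfl⟩
    intro t ht
    have hgρ : (g ρ).1 = ρ := by rw [hg0]
    rcases le_total t ρ with h | h
    · have h1 := key t ρ ht hρmem h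
      rw [hgρ] at h1
      linarith [h1]
    · have h1 := key ρ t hρmem ht h
      rw [hgρ] at h1
      linarith [h1]
  -- components
  set φ : ℝ → ℝ := fun t => (g t).2.1 with hφdef
  set χ : ℝ → ℝ := fun t => (g t).2.2 with hχdef
  have hφ' : ∀ t ∈ Ioo (ρ - ε) (ρ + ε), HasDerivAt φ (χ t) t := by
    intro t ht
    have := (((ContinuousLinearMap.fst ℝ ℝ ℝ).comp
      (ContinuousLinearMap.snd ℝ ℝ (ℝ × ℝ))).hasFDerivAt (x := g t)).comp_hasDerivAt t (hg t ht)
    simp [F, φ, χ] at this ⊢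
    exact this
  have hχ' : ∀ t ∈ Ioo (ρ - ε) (ρ + ε), HasDerivAt χ
      (-(((n:ℝ)+1)/t) * χ t - (n:ℝ) * φ t^2 - t * φ t * χ t) t := by
    intro t ht
    have h := (((ContinuousLinearMap.snd ℝ ℝ ℝ).comp
      (ContinuousLinearMap.snd ℝ ℝ (ℝ × ℝ))).hasFDerivAt (x := g t)).comp_hasDerivAt t (hg t ht)
    simp only [ContinuousLinearMap.coe_comp', Function.comp_def,
      ContinuousLinearMap.coe_snd', hFdef] at h
    rw [hgfst t ht] at h
    exact h
  -- the solution curve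
  set u : ℝ → ℝ × ℝ × ℝ := fun t => (t, W t, deriv W t) with hudef
  set v : ℝ → ℝ × ℝ × ℝ := Function.update u ρ x₀ with hvdef
  have hu' : ∀ t, 0 < t → t < ρ → HasDerivAt u (F (u t)) t := by
    intro t ht0 htρ
    have htm : ENNReal.ofReal t < rbar := (hlt t ht0.le).mpr htρ
    have hd := ((hasDerivAt_id' t).prodMk ((hdW hsol ht0.le htm).prodMk (hdW' hsol ht0.le htm)))
    have hFu : F (u t) = ((1:ℝ), deriv W t, deriv (deriv W) t) := by
      refine Prod.ext rfl (Prod.ext rfl ?_)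
      show -(((n:ℝ)+1)/t) * deriv W t - (n:ℝ) * W t^2 - t * W t * deriv W t
        = deriv (deriv W) t
      rw [ode hsol ht0 htm]
    rw [hFu]; exact hd
  have htendu : Tendsto u (𝓝[<] ρ) (𝓝 x₀) :=
    hidt.prodMk_nhds (htendW.prodMk_nhds htendW')
  -- Lipschitz neighbourhood of the vector field
  obtain ⟨K, sK, hsK, hK⟩ := hF.exists_lipschitzOnWith
  obtain ⟨δ, hδ, hball⟩ := Metric.mem_nhds_iff.mp hsK
  -- choose `a` close to ρ
  have hS : {t : ℝ | t ∈ Ioo (max c (ρ - ε)) ρ ∧ u t ∈ Metric.ball x₀ δ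
      ∧ g t ∈ Metric.ball x₀ δ} ∈ 𝓝[<] ρ := by
    have h1 : Ioo (max c (ρ - ε)) ρ ∈ 𝓝[<] ρ :=
      Ioo_mem_nhdsLT_of_mem ⟨by simp [hcρ, hε], le_rfl⟩
    have h2 : ∀ᶠ t in 𝓝[<] ρ, u t ∈ Metric.ball x₀ δ :=
      htendu (Metric.ball_mem_nhds _ hδ)
    have h3 : ∀ᶠ t in 𝓝[<] ρ, g t ∈ Metric.ball x₀ δ := by
      have hgc : ContinuousAt g ρ := (hg ρ hρmem).continuousAt
      have : Tendsto g (𝓝[<] ρ) (𝓝 x₀) := by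
        rw [← hg0]
        exact hgc.tendsto.mono_left nhdsWithin_le_nhds
      exact this (Metric.ball_mem_nhds _ hδ)
    filter_upwards [h1, h2, h3] with t ht1 ht2 ht3
    exact ⟨ht1, ht2, ht3⟩
  obtain ⟨a', ha', hsub⟩ := mem_nhdsLT_iff_exists_Ioo_subset.mp hS
  set a : ℝ := (a' + ρ)/2 with hadef
  have haS : a ∈ {t : ℝ | t ∈ Ioo (max c (ρ - ε)) ρ ∧ u t ∈ Metric.ball x₀ δ
      ∧ g t ∈ Metric.ball x₀ δ} := hsub ⟨by simp [hadef]; linarith [mem_Iio.mp ha'],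
        by simp [hadef]; linarith [mem_Iio.mp ha']⟩
  have haρ : a < ρ := haS.1.2
  have hac : c < a := lt_of_le_of_lt (le_max_left _ _) haS.1.1
  have haε : ρ - ε < a := lt_of_le_of_lt (le_max_right _ _) haS.1.1
  have ha0 : 0 < a := hc0.trans hac
  -- uniqueness of solutions on [a, ρ]
  have ha'a : a' < a := by rw [hadef]; linarith [mem_Iio.mp ha']
  have heqold : ∀ t : ℝ, t ≠ ρ → u =ᶠ[𝓝 t] v := by
    intro t htne
    filter_upwards [isOpen_compl_singleton.mem_nhds htne] with y hy
    exact (Function.update_of_ne hy _ _).symm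
  have hvρ : v ρ = x₀ := Function.update_self _ _ _
  have htendv : Tendsto v (𝓝[<] ρ) (𝓝 x₀) := by
    refine Tendsto.congr' ?_ htendu
    exact eventuallyEq_of_mem self_mem_nhdsWithin
      (fun y hy => (Function.update_of_ne (ne_of_lt hy) _ _).symm)
  have hIccsub : Icc a ρ ⊆ Ioo (ρ - ε) (ρ + ε) := fun x hx =>
    ⟨haε.trans_le hx.1, lt_of_le_of_lt hx.2 (by linarith)⟩
  have hvcont : ContinuousOn v (Icc a ρ) := by
    intro x hx
    rcases eq_or_lt_of_le hx.2 with h | h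
    · subst h
      show Tendsto v (𝓝[Icc a ρ] ρ) (𝓝 (v ρ))
      rw [hvρ]
      have h1 : Tendsto v (𝓝[Iio ρ] ρ) (𝓝 x₀) := htendv
      have h2 : Tendsto v (𝓝[{ρ}] ρ) (𝓝 x₀) := by
        rw [nhdsWithin_singleton, ← hvρ]
        exact tendsto_pure_nhds v ρ
      have h3 : Tendsto v (𝓝[Iic ρ] ρ) (𝓝 x₀) := by
        rw [← Iio_union_right, nhdsWithin_union]
        exact Tendsto.sup h1 h2
      exact h3.mono_left (nhdsWithin_mono _ Icc_subset_Iic_self)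
    · have hxm : ENNReal.ofReal x < rbar := hmem x (hac.le.trans hx.1) h
      have hucont : ContinuousAt u x :=
        continuousAt_id.prodMk ((contW hsol (hc0.le.trans (hac.le.trans hx.1)) hxm).prodMk
          (contW' hsol (hc0.le.trans (hac.le.trans hx.1)) hxm))
      exact (hucont.congr (heqold x (ne_of_lt h))).continuousWithinAt
  have hFu : ∀ t, 0 < t → t < ρ →
      F (u t) = ((1:ℝ), deriv W t, deriv (deriv W) t) := by
    intro t ht0 htρ
    have htm : ENNReal.ofReal t < rbar := (hlt t ht0.le).mpr htρ
    refine Prod.ext rfl (Prod.ext rfl ?_)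
    show -(((n:ℝ)+1)/t) * deriv W t - (n:ℝ) * W t^2 - t * W t * deriv W t
      = deriv (deriv W) t
    rw [ode hsol ht0 htm]
  have hFx₀ : F x₀ = ((1:ℝ), L, B) := rfl
  have hf' : ∀ t ∈ Ioc a ρ, HasDerivWithinAt v (F (v t)) (Iic t) t := by
    intro t ht
    rcases eq_or_lt_of_le ht.2 with h | h
    · subst h
      rw [hvρ]
      apply hasDerivWithinAt_Iic_of_tendsto_deriv (s := Ioo a ρ)
      · intro y hy
        have h1 : HasDerivAt u (F (u y)) y := hu' y (ha0.trans hy.1) hy.2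
        have h2 : HasDerivAt v (F (u y)) y :=
          h1.congr_of_eventuallyEq (heqold y (ne_of_lt hy.2)).symm
        exact h2.differentiableAt.differentiableWithinAt
      · show Tendsto v (𝓝[Ioo a ρ] ρ) (𝓝 (v ρ))
        rw [hvρ]
        exact htendv.mono_left (nhdsWithin_mono _ Ioo_subset_Iio_self)
      · exact Ioo_mem_nhdsLT_of_mem ⟨haρ, le_rfl⟩
      · rw [hFx₀]
        refine Tendsto.congr' ?_ (tendsto_const_nhds.prodMk_nhds
          (htendW'.prodMk_nhds htendW''))
        filter_upwards [Ioo_mem_nhdsLT_of_mem (⟨haρ, le_rfl⟩ : ρ ∈ Ioc a ρ)] with y hy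
        have h1 : HasDerivAt u (F (u y)) y := hu' y (ha0.trans hy.1) hy.2
        have h2 : HasDerivAt v (F (u y)) y :=
          h1.congr_of_eventuallyEq (heqold y (ne_of_lt hy.2)).symm
        rw [h2.deriv, hFu y (ha0.trans hy.1) hy.2]
    · have h1 : HasDerivAt u (F (u t)) t := hu' t (ha0.trans ht.1) h
      have h2 : HasDerivAt v (F (u t)) t :=
        h1.congr_of_eventuallyEq (heqold t (ne_of_lt h)).symm
      have h3 : v t = u t := Function.update_of_ne (ne_of_lt h) _ _
      rw [h3]
      exact h2.hasDerivWithinAt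
  have hvball : ∀ t ∈ Ioc a ρ, v t ∈ Metric.ball x₀ δ := by
    intro t ht
    rcases eq_or_lt_of_le ht.2 with h | h
    · subst h; rw [hvρ]; exact Metric.mem_ball_self hδ
    · rw [show v t = u t from Function.update_of_ne (ne_of_lt h) _ _]
      exact (hsub ⟨ha'a.trans ht.1, h⟩).2.1
  have hgcont : ContinuousOn g (Icc a ρ) := fun x hx =>
    ((hg x (hIccsub hx)).continuousAt).continuousWithinAt
  have hg' : ∀ t ∈ Ioc a ρ, HasDerivWithinAt g (F (g t)) (Iic t) t := fun t ht =>
    (hg t (hIccsub ⟨ht.1.le, ht.2⟩)).hasDerivWithinAt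
  have hgball : ∀ t ∈ Ioc a ρ, g t ∈ Metric.ball x₀ δ := by
    intro t ht
    rcases eq_or_lt_of_le ht.2 with h | h
    · subst h; rw [hg0]; exact Metric.mem_ball_self hδ
    · exact (hsub ⟨ha'a.trans ht.1, h⟩).2.2
  have hEq : Set.EqOn v g (Icc a ρ) := by
    refine ODE_solution_unique_of_mem_Icc_left (v := fun _ p => F p)
      (s := fun _ => Metric.ball x₀ δ) (fun _ _ => hK.mono hball)
      hvcont hf' hvball hgcont hg' hgball ?_
    rw [hvρ, hg0]
  -- the extension
  set ψ : ℝ → ℝ := fun r => if r < ρ then W r else φ r with hψdef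
  have hψφ : Set.EqOn ψ φ (Ioo a (ρ + ε)) := by
    intro r hr
    by_cases h : r < ρ
    · have h1 : v r = g r := hEq ⟨hr.1.le, h.le⟩
      have h2 : v r = u r := Function.update_of_ne (ne_of_lt h) _ _
      simp only [ψ, if_pos h, φ]
      rw [← h1, h2]
    · simp only [ψ, if_neg h, φ]
  have hψW : Set.EqOn ψ W (Iio ρ) := fun r hr => if_pos hr
  -- ψ is a solution on [0, ρ + ε)
  have hρε : 0 < ρ + ε := by linarith
  have hball' : ∀ r : ℝ, ENNReal.ofReal r < ENNReal.ofReal (ρ + ε) → r < ρ + ε :=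
    fun r hr => by rwa [ENNReal.ofReal_lt_ofReal_iff hρε] at hr
  have hevW : ∀ r : ℝ, r < ρ → ψ =ᶠ[𝓝 r] W := fun r hr =>
    eventuallyEq_of_mem (Iio_mem_nhds hr) hψW
  have hevφ : ∀ r : ℝ, a < r → r < ρ + ε → ψ =ᶠ[𝓝 r] φ := fun r h1 h2 =>
    eventuallyEq_of_mem (Ioo_mem_nhds h1 h2) hψφ
  have hIooε : ∀ r : ℝ, a < r → r < ρ + ε → r ∈ Ioo (ρ - ε) (ρ + ε) := fun r h1 h2 =>
    ⟨haε.trans h1, h2⟩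
  have hderχ : ∀ r : ℝ, a < r → r < ρ + ε → deriv ψ =ᶠ[𝓝 r] χ := by
    intro r h1 h2
    filter_upwards [Ioo_mem_nhds h1 h2] with y hy
    rw [(hevφ y hy.1 hy.2).deriv_eq, (hφ' y (hIooε y hy.1 hy.2)).deriv]
  have hsol' : IsW1SolOn n (ENNReal.ofReal (ρ + ε)) ψ := by
    refine ⟨?_, ?_, ?_, ?_⟩
    · rw [hψW (show (0:ℝ) ∈ Iio ρ from hρ), hsol.1]
    · rw [(hevW 0 hρ).deriv_eq, hsol.2.1]
    · intro r h0 hr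
      have hr' := hball' r hr
      by_cases h : r < ρ
      · have hWd := hsol.2.2.1 r h0 ((hlt r h0).mpr h)
        exact ⟨(hevW r h).differentiableAt_iff.mpr hWd.1,
          ((hevW r h).deriv.differentiableAt_iff).mpr hWd.2⟩
      · push_neg at h
        have h1 : a < r := haρ.trans_le h
        have hmem' := hIooε r h1 hr'
        exact ⟨((hevφ r h1 hr').differentiableAt_iff).mpr (hφ' r hmem').differentiableAt,
          ((hderχ r h1 hr').differentiableAt_iff).mpr (hχ' r hmem').differentiableAt⟩
    · intro r h0 hr
      have hr' := hball' r hr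
      by_cases h : r < ρ
      · have heq := hevW r h
        have hodeW := hsol.2.2.2 r h0 ((hlt r h0.le).mpr h)
        rw [heq.deriv.deriv_eq, heq.deriv_eq, heq.eq_of_nhds]
        exact hodeW
      · push_neg at h
        have h1 : a < r := haρ.trans_le h
        have hmem' := hIooε r h1 hr'
        have heq := hevφ r h1 hr'
        have hder := hderχ r h1 hr'
        rw [heq.eq_of_nhds, hder.eq_of_nhds, hder.deriv_eq, (hχ' r hmem').deriv]
        ring
  -- contradiction with maximality
  have hlt' : rbar < ENNReal.ofReal (ρ + ε) := by
    have : rbar = ENNReal.ofReal ρ := (ENNReal.ofReal_toReal hne).symm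
    rw [this]
    exact (ENNReal.ofReal_lt_ofReal_iff (by linarith)).mpr (by linarith)
  exact hmax _ hlt' ψ (fun r hr => hψW ((hlt r hr.1).mp hr.2)) hsol'

end S18

/-- Remark 6.5: the normalized regular steady state is global,
positive and nonincreasing. If `W₁` is the maximal solution of the IVP on `[0, r̄)`,
then `r̄ = ∞`, `W₁ > 0` and `W₁' ≤ 0` on `[0,∞)`. -/
theorem statement18
    (n : ℕ) (hn3 : 3 ≤ n)
    (W : ℝ → ℝ) (rbar : ℝ≥0∞) (hrbar : 0 < rbar)
    (hsol : IsW1SolOn n rbar W)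
    (hmax : ∀ b : ℝ≥0∞, rbar < b → ∀ ψ : ℝ → ℝ,
      Set.EqOn ψ W {r : ℝ | 0 ≤ r ∧ ENNReal.ofReal r < rbar} → ¬ IsW1SolOn n b ψ) :
    rbar = ⊤ ∧ (∀ r : ℝ, 0 ≤ r → 0 < W r) ∧ (∀ r : ℝ, 0 ≤ r → deriv W r ≤ 0) := by
  have htop : rbar = ⊤ := S18.global hn3 hrbar hsol hmax
  subst htop
  exact ⟨rfl, fun r h0 => S18.wpos hsol hn3 h0 ENNReal.ofReal_lt_top,
    fun r h0 => S18.derivW_nonpos hsol hn3 h0 ENNReal.ofReal_lt_top⟩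
end
end
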